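/- arXiv:1510.02944 — 5 statements merged into one kernel-verified Lean document; each statement's English description precedes it below -/
import Mathlib

section
/- Let λ = (λ_1, λ_2, …, λ_n) be a partition all of whose parts are even, and let α = (λ_1/2, λ_2/2, …, λ_n/2). Then the Littlewood–Richardson coefficient c^λ_{αα} is at least 1. -/
/-- A partition: a weakly decreasing finite sequence (list) of positive
integers. -/
def IsPartition (l : List ℕ) : Prop :=
  l.Pairwise (· ≥ ·) ∧ ∀ x ∈ l, 0 < x

/-- The `i`-th part (0-indexed) of a partition, `0` beyond its length. -/
def part (l : List ℕ) (i : ℕ) : ℕ := l.getD i 0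

/-- Cell `(i, j)` (row `i`, column `j`, both 0-indexed) lies in the skew
Young diagram `ν/λ`. -/
def InSkew (nu lam : List ℕ) (i j : ℕ) : Prop :=
  part lam i ≤ j ∧ j < part nu i

/-- Cell `(i, j)` comes weakly before cell `(r, c)` in the reverse reading
order: rows are read top to bottom, and each row is read right to left. -/
def ReadingLE (i j r c : ℕ) : Prop := i < r ∨ (i = r ∧ c ≤ j)

/-- `T` is a Littlewood–Richardson tableau of shape `ν/λ` and content `μ`:
`λ ⊆ ν`, the entries of `T` are positive exactly on the cells of the skew
diagram `ν/λ`, entries weakly increase from left to right along rows,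
entries strictly increase from top to bottom down columns, for every `j ≥ 1`
the entry `j` occurs exactly `μ_j` times, and the reverse reading word is a
lattice word: every prefix contains at least as many occurrences of `j` as
of `j + 1`, for every `j ≥ 1`. -/
structure IsLRTableau (nu lam mu : List ℕ) (T : ℕ → ℕ → ℕ) : Prop where
  subset : ∀ i, part lam i ≤ part nu i
  support : ∀ i j, 0 < T i j ↔ InSkew nu lam i j
  row_weak : ∀ i j j', InSkew nu lam i j → InSkew nu lam i j' → j ≤ j' →
    T i j ≤ T i j'
  col_strict : ∀ i i' j, InSkew nu lam i j → InSkew nu lam i' j → i < i' →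
    T i j < T i' j
  content : ∀ k : ℕ, {p : ℕ × ℕ | T p.1 p.2 = k + 1}.ncard = part mu k
  lattice : ∀ r c k : ℕ,
    {p : ℕ × ℕ | T p.1 p.2 = k + 2 ∧ ReadingLE p.1 p.2 r c}.ncard ≤
    {p : ℕ × ℕ | T p.1 p.2 = k + 1 ∧ ReadingLE p.1 p.2 r c}.ncard

/-- The Littlewood–Richardson coefficient `c^ν_{λμ}`: the number of
Littlewood–Richardson tableaux of shape `ν/λ` and content `μ`. -/
noncomputable def lrCoeff (nu lam mu : List ℕ) : ℕ :=
  {T : ℕ → ℕ → ℕ | IsLRTableau nu lam mu T}.ncard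

/-- The Newell–Littlewood coefficient
`N^ν_{λμ} = Σ_{α,β,γ} c^λ_{αβ} · c^μ_{αγ} · c^ν_{βγ}`, the sum running over
all triples of partitions `(α, β, γ)` (only finitely many terms are
nonzero). -/
noncomputable def nlCoeff (lam mu nu : List ℕ) : ℕ :=
  ∑ᶠ x : {l : List ℕ // IsPartition l} × {l : List ℕ // IsPartition l} ×
      {l : List ℕ // IsPartition l},
    lrCoeff lam x.1.val x.2.1.val * lrCoeff mu x.1.val x.2.2.val *
      lrCoeff nu x.2.1.val x.2.2.val

lemma part_map_div (lam : List ℕ) (i : ℕ) :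
    part (lam.map (· / 2)) i = part lam i / 2 := by
  unfold part
  rcases h : lam[i]? with _ | x
  · simp [List.getD_eq_getElem?_getD, h]
  · simp [List.getD_eq_getElem?_getD, h]

lemma part_anti (lam : List ℕ) (hs : lam.Pairwise (· ≥ ·)) {i i' : ℕ} (h : i ≤ i') :
    part lam i' ≤ part lam i := by
  unfold part
  by_cases hi' : i' < lam.length
  · have hi : i < lam.length := lt_of_le_of_lt h hi'
    rw [List.getD_eq_getElem _ _ hi, List.getD_eq_getElem _ _ hi']
    rcases eq_or_lt_of_le h with rfl | hlt
    · exact le_refl _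
    · exact List.pairwise_iff_getElem.1 hs i i' hi hi' hlt
  · rw [List.getD_eq_default _ _ (le_of_not_gt hi')]
    exact Nat.zero_le _

lemma part_even (lam : List ℕ) (heven : ∀ x ∈ lam, Even x) (i : ℕ) :
    Even (part lam i) := by
  unfold part
  by_cases hi : i < lam.length
  · rw [List.getD_eq_getElem _ _ hi]; exact heven _ (lam.getElem_mem hi)
  · rw [List.getD_eq_default _ _ (le_of_not_gt hi)]; exact Even.zero

lemma part_eq_zero (lam : List ℕ) {i : ℕ} (h : lam.length ≤ i) : part lam i = 0 :=
  List.getD_eq_default _ _ h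

lemma rowSet_eq (a x y : ℕ) :
    {p : ℕ × ℕ | p.1 = a ∧ x ≤ p.2 ∧ p.2 < y} = (fun j => (a, j)) '' Set.Ico x y := by
  ext ⟨i, j⟩
  simp [Set.mem_image, eq_comm, and_comm, Prod.ext_iff]

lemma rowSet_ncard (a x y : ℕ) :
    {p : ℕ × ℕ | p.1 = a ∧ x ≤ p.2 ∧ p.2 < y}.ncard = y - x := by
  rw [rowSet_eq, Set.ncard_image_of_injective _ (fun j j' h => (Prod.ext_iff.1 h).2),
    Set.ncard_eq_toFinset_card', Set.toFinset_Ico, Nat.card_Ico]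

lemma rowSet_finite (a x y : ℕ) :
    {p : ℕ × ℕ | p.1 = a ∧ x ≤ p.2 ∧ p.2 < y}.Finite := by
  rw [rowSet_eq]; exact (Set.finite_Ico x y).image _

open Classical in
noncomputable def T0 (lam : List ℕ) : ℕ → ℕ → ℕ :=
  fun i j => if InSkew lam (lam.map (· / 2)) i j then i + 1 else 0

lemma T0_isLR (lam : List ℕ) (hlam : IsPartition lam) (heven : ∀ x ∈ lam, Even x) :
    IsLRTableau lam (lam.map (· / 2)) (lam.map (· / 2)) (T0 lam) := by
  classical
  set α : ℕ → ℕ := fun i => part lam i / 2 with hα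
  have hαpart : ∀ i, part (lam.map (· / 2)) i = α i := fun i => part_map_div lam i
  have hdouble : ∀ i, part lam i = 2 * α i := by
    intro i
    rcases part_even lam heven i with ⟨c, hc⟩
    simp [hα, hc]; omega
  have hαanti : ∀ {i i'}, i ≤ i' → α i' ≤ α i := fun h =>
    Nat.div_le_div_right (part_anti lam hlam.1 h)
  -- description of the entry-(k+1) set
  have hmem : ∀ (k : ℕ) (i j : ℕ), T0 lam i j = k + 1 ↔
      (i = k ∧ α k ≤ j ∧ j < part lam k) := by
    intro k i j
    simp only [T0, Set.mem_setOf_eq]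
    split
    · rename_i h
      rcases h with ⟨h1, h2⟩
      rw [hαpart] at h1
      constructor
      · rintro h; have : i = k := by omega
        subst this; exact ⟨rfl, h1, h2⟩
      · rintro ⟨rfl, _, _⟩; rfl
    · rename_i h
      constructor
      · omega
      · rintro ⟨rfl, h1, h2⟩
        exact absurd ⟨by rw [hαpart]; exact h1, h2⟩ h
  refine ⟨?_, ?_, ?_, ?_, ?_, ?_⟩
  · intro i; rw [hαpart]; exact Nat.div_le_self _ _
  · intro i j; simp only [T0]; split <;> simp_all
  · intro i j j' h _ _; simp [T0, h]
    split <;> omega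
  · intro i i' j h h' hlt; simp [T0, h, h']; omega
  · intro k
    have : {p : ℕ × ℕ | T0 lam p.1 p.2 = k + 1} =
        {p : ℕ × ℕ | p.1 = k ∧ α k ≤ p.2 ∧ p.2 < part lam k} := by
      ext p; exact hmem k p.1 p.2
    rw [this, rowSet_ncard, hαpart]
    have := hdouble k; omega
  · intro r c k
    have hsub2 : {p : ℕ × ℕ | T0 lam p.1 p.2 = k + 2 ∧ ReadingLE p.1 p.2 r c} ⊆
        {p : ℕ × ℕ | p.1 = k + 1 ∧ α (k+1) ≤ p.2 ∧ p.2 < part lam (k+1)} := by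
      intro p hp
      exact (hmem (k+1) p.1 p.2).1 hp.1
    rcases lt_trichotomy r (k + 1) with hr | hr | hr
    · -- r ≤ k : second set is empty
      have : {p : ℕ × ℕ | T0 lam p.1 p.2 = k + 2 ∧ ReadingLE p.1 p.2 r c} = ∅ := by
        ext p
        simp only [Set.mem_setOf_eq, Set.mem_empty_iff_false, iff_false, not_and]
        intro hT hR
        have hp1 : p.1 = k + 1 := (hsub2 ⟨hT, hR⟩).1
        rcases hR with h | ⟨h, _⟩ <;> omega
      rw [this]; simp
    · -- r = k + 1
      subst hr
      have h1 : {p : ℕ × ℕ | T0 lam p.1 p.2 = k + 1 ∧ ReadingLE p.1 p.2 (k+1) c} =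
          {p : ℕ × ℕ | p.1 = k ∧ α k ≤ p.2 ∧ p.2 < part lam k} := by
        ext p
        simp only [Set.mem_setOf_eq, hmem k p.1 p.2]
        refine ⟨fun h => h.1, fun h => ⟨h, Or.inl (by omega)⟩⟩
      have h2 : {p : ℕ × ℕ | T0 lam p.1 p.2 = k + 2 ∧ ReadingLE p.1 p.2 (k+1) c} ⊆
          {p : ℕ × ℕ | p.1 = k + 1 ∧ max (α (k+1)) c ≤ p.2 ∧ p.2 < part lam (k+1)} := by
        intro p hp
        have h3 := hsub2 hp
        rcases hp.2 with h | ⟨_, hc⟩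
        · exact absurd h3.1 (by omega)
        · exact ⟨h3.1, max_le h3.2.1 hc, h3.2.2⟩
      calc {p : ℕ × ℕ | T0 lam p.1 p.2 = k + 2 ∧ ReadingLE p.1 p.2 (k+1) c}.ncard
          ≤ {p : ℕ × ℕ | p.1 = k + 1 ∧ max (α (k+1)) c ≤ p.2 ∧ p.2 < part lam (k+1)}.ncard :=
            Set.ncard_le_ncard h2 (rowSet_finite _ _ _)
        _ = part lam (k+1) - max (α (k+1)) c := rowSet_ncard _ _ _
        _ ≤ α k := by
            have h4 := hdouble (k+1)
            have h5 : α (k+1) ≤ α k := hαanti (by omega)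
            omega
        _ = {p : ℕ × ℕ | T0 lam p.1 p.2 = k + 1 ∧ ReadingLE p.1 p.2 (k+1) c}.ncard := by
            rw [h1, rowSet_ncard]
            have := hdouble k; omega
    · -- r > k + 1 : both sets are full rows
      have h1 : {p : ℕ × ℕ | T0 lam p.1 p.2 = k + 1 ∧ ReadingLE p.1 p.2 r c} =
          {p : ℕ × ℕ | p.1 = k ∧ α k ≤ p.2 ∧ p.2 < part lam k} := by
        ext p
        simp only [Set.mem_setOf_eq, hmem k p.1 p.2]
        refine ⟨fun h => h.1, fun h => ⟨h, Or.inl (by omega)⟩⟩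
      have h2 : {p : ℕ × ℕ | T0 lam p.1 p.2 = k + 2 ∧ ReadingLE p.1 p.2 r c} =
          {p : ℕ × ℕ | p.1 = k + 1 ∧ α (k+1) ≤ p.2 ∧ p.2 < part lam (k+1)} := by
        ext p
        simp only [Set.mem_setOf_eq, hmem (k+1) p.1 p.2]
        refine ⟨fun h => h.1, fun h => ⟨h, Or.inl (by omega)⟩⟩
      rw [h1, h2, rowSet_ncard, rowSet_ncard]
      have h4 := hdouble (k+1)
      have h5 := hdouble k
      have h6 : α (k+1) ≤ α k := hαanti (by omega)
      omega

lemma part_anti' (lam : List ℕ) (hs : lam.Pairwise (· ≥ ·)) {i i' : ℕ} (h : i ≤ i') :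
    part lam i' ≤ part lam i := by
  unfold part
  by_cases hi' : i' < lam.length
  · have hi : i < lam.length := lt_of_le_of_lt h hi'
    rw [List.getD_eq_getElem _ _ hi, List.getD_eq_getElem _ _ hi']
    rcases eq_or_lt_of_le h with rfl | hlt
    · exact le_refl _
    · exact List.pairwise_iff_getElem.1 hs i i' hi hi' hlt
  · rw [List.getD_eq_default _ _ (le_of_not_gt hi')]
    exact Nat.zero_le _

lemma skew_finite (nu lam : List ℕ) (hs : nu.Pairwise (· ≥ ·)) :
    {p : ℕ × ℕ | InSkew nu lam p.1 p.2}.Finite := by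
  apply Set.Finite.subset
    (Set.finite_Iio nu.length |>.prod (Set.finite_Iio (part nu 0)))
  rintro ⟨i, j⟩ ⟨h1, h2⟩
  constructor
  · simp only [Set.mem_Iio]
    by_contra h
    rw [show part nu i = 0 from List.getD_eq_default _ _ (le_of_not_gt h)] at h2
    omega
  · simp only [Set.mem_Iio]
    exact lt_of_lt_of_le h2 (part_anti' nu hs (Nat.zero_le i))

lemma lr_val_bound (nu lam mu : List ℕ) (hs : nu.Pairwise (· ≥ ·))
    (hmu : ∀ k, mu.length ≤ k → part mu k = 0)
    (T : ℕ → ℕ → ℕ) (hT : IsLRTableau nu lam mu T) (i j : ℕ) :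
    T i j ≤ mu.length := by
  by_contra h
  push_neg at h
  set k := T i j - 1 with hk
  have hTij : T i j = k + 1 := by omega
  have hkk : mu.length ≤ k := by omega
  have hfin : {p : ℕ × ℕ | T p.1 p.2 = k + 1}.Finite := by
    apply Set.Finite.subset (skew_finite nu lam hs)
    intro p hp
    exact (hT.support p.1 p.2).1 (by simp only [Set.mem_setOf_eq] at hp; omega)
  have := hT.content k
  rw [hmu k hkk] at this
  have hemp := (Set.ncard_eq_zero hfin).1 this
  have : (i, j) ∈ {p : ℕ × ℕ | T p.1 p.2 = k + 1} := hTij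
  rw [hemp] at this
  exact this

lemma lr_set_finite (nu lam mu : List ℕ) (hs : nu.Pairwise (· ≥ ·))
    (hmu : ∀ k, mu.length ≤ k → part mu k = 0) :
    {T : ℕ → ℕ → ℕ | IsLRTableau nu lam mu T}.Finite := by
  classical
  set n := nu.length
  set m := part nu 0
  set N := mu.length
  set F : (ℕ → ℕ → ℕ) → (Fin n → Fin m → Fin (N + 1)) :=
    fun T i j => ⟨min (T i.1 j.1) N, by omega⟩ with hF
  apply Set.Finite.of_finite_image (f := F) (Set.toFinite _)
  intro T hT T' hT' hFeq
  funext i j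
  by_cases hsk : InSkew nu lam i j
  · have hi : i < n := by
      by_contra h
      have : part nu i = 0 := List.getD_eq_default _ _ (le_of_not_gt h)
      rcases hsk with ⟨_, h2⟩; omega
    have hj : j < m := lt_of_lt_of_le hsk.2 (part_anti' nu hs (Nat.zero_le i))
    have hb : T i j ≤ N := lr_val_bound nu lam mu hs hmu T hT i j
    have hb' : T' i j ≤ N := lr_val_bound nu lam mu hs hmu T' hT' i j
    have := congrFun (congrFun hFeq ⟨i, hi⟩) ⟨j, hj⟩
    simp only [hF, Fin.mk.injEq] at this
    omega
  · have h1 : ¬ 0 < T i j := fun h => hsk ((hT.support i j).1 h)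
    have h2 : ¬ 0 < T' i j := fun h => hsk ((hT'.support i j).1 h)
    omega

/-- If all parts of `λ` are even and `α = (λ₁/2, …, λ_n/2)`, then
`c^λ_{αα} ≥ 1`. -/
theorem one_le_lrCoeff_half_half (lam : List ℕ)
    (hlam : IsPartition lam) (heven : ∀ x ∈ lam, Even x) :
    1 ≤ lrCoeff lam (lam.map (· / 2)) (lam.map (· / 2)) := by
  have hmu : ∀ k, (lam.map (· / 2)).length ≤ k → part (lam.map (· / 2)) k = 0 :=
    fun k hk => List.getD_eq_default _ _ hk
  have hfin := lr_set_finite lam (lam.map (· / 2)) (lam.map (· / 2)) hlam.1 hmu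
  have hne : {T : ℕ → ℕ → ℕ |
      IsLRTableau lam (lam.map (· / 2)) (lam.map (· / 2)) T}.Nonempty :=
    ⟨T0 lam, T0_isLR lam hlam heven⟩
  unfold lrCoeff
  exact (Set.ncard_pos hfin).2 hne
end

section
/- Let k ≥ 1 and let λ = (λ_1, λ_2, …, λ_{2k}) be a partition with exactly 2k parts, all parts odd and pairwise distinct (so λ_1 > λ_2 > ⋯ > λ_{2k} > 0). Define α = ((λ_1+1)/2, …, (λ_k+1)/2, (λ_{k+1}−1)/2, …, (λ_{2k}−1)/2) and β = ((λ_1−1)/2, …, (λ_k−1)/2, (λ_{k+1}+1)/2, …, (λ_{2k}+1)/2). Then α and β are partitions and the Littlewood–Richardson coefficient c^λ_{αβ} is at least 1. -/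
/-- The partition `α = ((λ₁+1)/2, …, (λ_k+1)/2, (λ_{k+1}−1)/2, …, (λ_{2k}−1)/2)`
associated to a partition `λ` with `2k` parts. -/
def distAlpha (k : ℕ) (lam : List ℕ) : List ℕ :=
  (List.range (2 * k)).map fun i =>
    if i < k then (part lam i + 1) / 2 else (part lam i - 1) / 2

/-- The partition `β = ((λ₁−1)/2, …, (λ_k−1)/2, (λ_{k+1}+1)/2, …, (λ_{2k}+1)/2)`
associated to a partition `λ` with `2k` parts. -/
def distBeta (k : ℕ) (lam : List ℕ) : List ℕ :=
  (List.range (2 * k)).map fun i =>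
    if i < k then (part lam i - 1) / 2 else (part lam i + 1) / 2

/- ### Auxiliary lemmas -/

lemma part_map_range (n : ℕ) (f : ℕ → ℕ) (i : ℕ) :
    part ((List.range n).map f) i = if i < n then f i else 0 := by
  unfold part
  rcases lt_or_ge i n with h | h
  · rw [List.getD_eq_getElem _ _ (by simpa using h)]
    simp [h]
  · rw [List.getD_eq_default _ _ (by simpa using h)]
    simp [not_lt.mpr h]

lemma ncard_row (m a b : ℕ) :
    ({p : ℕ × ℕ | p.1 = m ∧ a ≤ p.2 ∧ p.2 < b}).ncard = b - a := by
  have he : {p : ℕ × ℕ | p.1 = m ∧ a ≤ p.2 ∧ p.2 < b}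
      = (Prod.mk m) '' (Set.Ico a b) := by
    ext ⟨x, y⟩
    simp only [Set.mem_setOf_eq, Set.mem_image, Set.mem_Ico, Prod.mk.injEq]
    constructor
    · rintro ⟨rfl, h1, h2⟩; exact ⟨y, ⟨h1, h2⟩, rfl, rfl⟩
    · rintro ⟨z, ⟨h1, h2⟩, rfl, rfl⟩; exact ⟨rfl, h1, h2⟩
  rw [he, Set.ncard_image_of_injective _ (fun x y h => (Prod.mk.injEq _ _ _ _).mp h |>.2),
    show (Set.Ico a b) = ↑(Finset.Ico a b) by simp, Set.ncard_coe_finset, Nat.card_Ico]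

lemma row_finite (m a b : ℕ) :
    ({p : ℕ × ℕ | p.1 = m ∧ a ≤ p.2 ∧ p.2 < b}).Finite := by
  apply Set.Finite.subset (Set.finite_Icc (m, 0) (m, b))
  rintro ⟨x, y⟩ ⟨rfl, h1, h2⟩
  simp [Prod.le_def]; omega

/-- For a partition `λ` with exactly `2k` parts, all odd and pairwise
distinct, the sequences `α` and `β` are partitions (weakly decreasing, `α`
possibly ending in a zero part) and `c^λ_{αβ} ≥ 1`. -/
theorem distAlphaBeta_partitions_and_one_le_lrCoeff
    (k : ℕ) (hk : 1 ≤ k) (lam : List ℕ)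
    (hlen : lam.length = 2 * k)
    (hsort : lam.Pairwise (· > ·))
    (hodd : ∀ x ∈ lam, Odd x) :
    (distAlpha k lam).Pairwise (· ≥ ·) ∧
    IsPartition (distBeta k lam) ∧
    1 ≤ lrCoeff lam (distAlpha k lam) (distBeta k lam) := by
  have hodd' : ∀ i, i < 2 * k → Odd (part lam i) := by
    intro i hi
    apply hodd
    have : part lam i = lam.get ⟨i, by omega⟩ := by
      unfold part; rw [List.getD_eq_getElem _ _ (by omega)]; rfl
    rw [this]; exact List.get_mem lam ⟨i, by omega⟩
  have hdec : ∀ i j, i < j → j < 2 * k → part lam j < part lam i := by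
    intro i j hij hj
    have h := hsort.rel_get_of_lt (a := ⟨i, by omega⟩) (b := ⟨j, by omega⟩) (by exact hij)
    have e1 : part lam i = lam.get ⟨i, by omega⟩ := by
      unfold part; rw [List.getD_eq_getElem _ _ (by omega)]; rfl
    have e2 : part lam j = lam.get ⟨j, by omega⟩ := by
      unfold part; rw [List.getD_eq_getElem _ _ (by omega)]; rfl
    rw [e1, e2]; exact h
  have hgap : ∀ i j, i < j → j < 2 * k → part lam j + 2 ≤ part lam i := by
    intro i j hij hj
    obtain ⟨a, ha⟩ := hodd' i (by omega)
    obtain ⟨b, hb⟩ := hodd' j hj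
    have := hdec i j hij hj
    omega
  have hpos : ∀ i, i < 2 * k → 1 ≤ part lam i := by
    intro i hi
    obtain ⟨a, ha⟩ := hodd' i hi; omega
  have hzero : ∀ i, 2 * k ≤ i → part lam i = 0 := by
    intro i hi; unfold part; rw [List.getD_eq_default _ _ (by omega)]
  set A := fun i => part (distAlpha k lam) i with hA
  set B := fun i => part (distBeta k lam) i with hB
  have hAeq : ∀ i, A i = if i < 2 * k then
      (if i < k then (part lam i + 1) / 2 else (part lam i - 1) / 2) else 0 := by
    intro i; rw [hA]; exact part_map_range _ _ i
  have hBeq : ∀ i, B i = if i < 2 * k then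
      (if i < k then (part lam i - 1) / 2 else (part lam i + 1) / 2) else 0 := by
    intro i; rw [hB]; exact part_map_range _ _ i
  have hrowlen : ∀ i, part lam i - A i = B i := by
    intro i
    rw [hAeq, hBeq]
    rcases lt_or_ge i (2 * k) with hi | hi
    · obtain ⟨a, ha⟩ := hodd' i hi
      rw [if_pos hi, if_pos hi]
      rcases lt_or_ge i k with hik | hik
      · rw [if_pos hik, if_pos hik]; omega
      · rw [if_neg (not_lt.mpr hik), if_neg (not_lt.mpr hik)]; omega
    · rw [if_neg (not_lt.mpr hi), if_neg (not_lt.mpr hi), hzero i hi]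
  have hAle : ∀ i, A i ≤ part lam i := by
    intro i
    rw [hAeq]
    rcases lt_or_ge i (2 * k) with hi | hi
    · obtain ⟨a, ha⟩ := hodd' i hi
      rw [if_pos hi]
      rcases lt_or_ge i k with hik | hik
      · rw [if_pos hik]; omega
      · rw [if_neg (not_lt.mpr hik)]; omega
    · rw [if_neg (not_lt.mpr hi)]; omega
  have hBmono : ∀ i j, i ≤ j → B j ≤ B i := by
    intro i j hij
    rcases eq_or_lt_of_le hij with rfl | hij
    · exact le_refl _
    rw [hBeq, hBeq]
    rcases lt_or_ge j (2 * k) with hj | hj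
    · have hi : i < 2 * k := by omega
      have hg := hgap i j hij hj
      obtain ⟨a, ha⟩ := hodd' i hi
      obtain ⟨b, hb⟩ := hodd' j hj
      rw [if_pos hi, if_pos hj]
      rcases lt_or_ge i k with hik | hik <;> rcases lt_or_ge j k with hjk | hjk
      · rw [if_pos hik, if_pos hjk]; omega
      · rw [if_pos hik, if_neg (not_lt.mpr hjk)]; omega
      · omega
      · rw [if_neg (not_lt.mpr hik), if_neg (not_lt.mpr hjk)]; omega
    · rw [if_neg (not_lt.mpr hj)]; omega
  have hBpos : ∀ i, i < 2 * k → 1 ≤ B i := by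
    intro i hi
    rw [hBeq, if_pos hi]
    rcases lt_or_ge i k with hik | hik
    · have hg := hgap i k hik (by omega)
      have h1 := hpos k (by omega)
      obtain ⟨a, ha⟩ := hodd' i hi
      rw [if_pos hik]; omega
    · have h1 := hpos i hi
      obtain ⟨a, ha⟩ := hodd' i hi
      rw [if_neg (not_lt.mpr hik)]; omega
  have hAmono : ∀ i j, i ≤ j → A j ≤ A i := by
    intro i j hij
    rcases eq_or_lt_of_le hij with rfl | hij
    · exact le_refl _
    rw [hAeq, hAeq]
    rcases lt_or_ge j (2 * k) with hj | hj
    · have hi : i < 2 * k := by omega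
      have hg := hgap i j hij hj
      obtain ⟨a, ha⟩ := hodd' i hi
      obtain ⟨b, hb⟩ := hodd' j hj
      rw [if_pos hi, if_pos hj]
      rcases lt_or_ge i k with hik | hik <;> rcases lt_or_ge j k with hjk | hjk
      · rw [if_pos hik, if_pos hjk]; omega
      · rw [if_pos hik, if_neg (not_lt.mpr hjk)]; omega
      · omega
      · rw [if_neg (not_lt.mpr hik), if_neg (not_lt.mpr hjk)]; omega
    · rw [if_neg (not_lt.mpr hj)]; omega
  have sortedA : (distAlpha k lam).Pairwise (· ≥ ·) := by
    unfold distAlpha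
    rw [List.pairwise_map]
    apply (List.pairwise_lt_range (n := 2 * k)).imp_of_mem
    intro a b ha hb hab
    have ha' : a < 2 * k := by simpa using ha
    have hb' : b < 2 * k := by simpa using hb
    have h := hAmono a b (le_of_lt hab)
    rw [hAeq, hAeq, if_pos ha', if_pos hb'] at h
    exact h
  have sortedB : (distBeta k lam).Pairwise (· ≥ ·) := by
    unfold distBeta
    rw [List.pairwise_map]
    apply (List.pairwise_lt_range (n := 2 * k)).imp_of_mem
    intro a b ha hb hab
    have ha' : a < 2 * k := by simpa using ha
    have hb' : b < 2 * k := by simpa using hb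
    have h := hBmono a b (le_of_lt hab)
    rw [hBeq, hBeq, if_pos ha', if_pos hb'] at h
    exact h
  have posB : ∀ x ∈ distBeta k lam, 0 < x := by
    intro x hx
    unfold distBeta at hx
    simp only [List.mem_map, List.mem_range] at hx
    obtain ⟨i, hi, rfl⟩ := hx
    have h := hBpos i hi
    rw [hBeq, if_pos hi] at h
    exact h
  refine ⟨sortedA, ⟨sortedB, posB⟩, ?_⟩
  set T : ℕ → ℕ → ℕ := fun i j => if A i ≤ j ∧ j < part lam i then i + 1 else 0 with hT
  have hTval : ∀ m : ℕ, {p : ℕ × ℕ | T p.1 p.2 = m + 1}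
      = {p : ℕ × ℕ | p.1 = m ∧ A m ≤ p.2 ∧ p.2 < part lam m} := by
    intro m
    ext ⟨i, j⟩
    simp only [Set.mem_setOf_eq, hT]
    constructor
    · intro h
      by_cases hc : A i ≤ j ∧ j < part lam i
      · rw [if_pos hc] at h
        have hi : i = m := by omega
        subst hi
        exact ⟨rfl, hc.1, hc.2⟩
      · rw [if_neg hc] at h; omega
    · rintro ⟨rfl, h1, h2⟩
      rw [if_pos ⟨h1, h2⟩]
  have hTrow_ncard : ∀ m : ℕ, {p : ℕ × ℕ | T p.1 p.2 = m + 1}.ncard = B m := by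
    intro m
    rw [hTval, ncard_row, hrowlen]
  have hTrow_fin : ∀ m : ℕ, {p : ℕ × ℕ | T p.1 p.2 = m + 1}.Finite := by
    intro m; rw [hTval]; exact row_finite _ _ _
  have htab : IsLRTableau lam (distAlpha k lam) (distBeta k lam) T := by
    constructor
    · exact hAle
    · intro i j
      constructor
      · intro h
        by_cases hc : A i ≤ j ∧ j < part lam i
        · exact hc
        · rw [hT] at h; simp only at h; rw [if_neg hc] at h; omega
      · intro h
        have hc : A i ≤ j ∧ j < part lam i := h
        rw [hT]; simp only; rw [if_pos hc]; omega
    · intro i j j' hj hj' _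
      have hc : A i ≤ j ∧ j < part lam i := hj
      have hc' : A i ≤ j' ∧ j' < part lam i := hj'
      rw [hT]; simp only; rw [if_pos hc, if_pos hc']
    · intro i i' j hj hj' hii'
      have hc : A i ≤ j ∧ j < part lam i := hj
      have hc' : A i' ≤ j ∧ j < part lam i' := hj'
      rw [hT]; simp only; rw [if_pos hc, if_pos hc']; omega
    · intro m
      exact hTrow_ncard m
    · intro r c m
      rcases le_or_gt r m with hrm | hrm
      · have he : {p : ℕ × ℕ | T p.1 p.2 = m + 2 ∧ ReadingLE p.1 p.2 r c} = ∅ := by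
          ext ⟨i, j⟩
          simp only [Set.mem_setOf_eq, Set.mem_empty_iff_false, iff_false, not_and]
          intro hT1 hRL
          have hmem : (i, j) ∈ {p : ℕ × ℕ | p.1 = m + 1 ∧ A (m + 1) ≤ p.2 ∧ p.2 < part lam (m + 1)} := by
            rw [← hTval]; exact hT1
          have hi : i = m + 1 := hmem.1
          rcases hRL with h | ⟨h, _⟩ <;> omega
        rw [he, Set.ncard_empty]
        exact Nat.zero_le _
      · have hsub1 : {p : ℕ × ℕ | T p.1 p.2 = m + 2 ∧ ReadingLE p.1 p.2 r c}
            ⊆ {p : ℕ × ℕ | T p.1 p.2 = (m + 1) + 1} := fun p hp => hp.1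
        have hsub2 : {p : ℕ × ℕ | T p.1 p.2 = m + 1}
            ⊆ {p : ℕ × ℕ | T p.1 p.2 = m + 1 ∧ ReadingLE p.1 p.2 r c} := by
          rintro ⟨i, j⟩ hp
          have hmem : (i, j) ∈ {p : ℕ × ℕ | p.1 = m ∧ A m ≤ p.2 ∧ p.2 < part lam m} := by
            rw [← hTval]; exact hp
          exact ⟨hp, Or.inl (by rw [hmem.1]; omega)⟩
        have hfin2 : {p : ℕ × ℕ | T p.1 p.2 = m + 1 ∧ ReadingLE p.1 p.2 r c}.Finite :=
          (hTrow_fin m).subset (fun p hp => hp.1)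
        calc {p : ℕ × ℕ | T p.1 p.2 = m + 2 ∧ ReadingLE p.1 p.2 r c}.ncard
            ≤ {p : ℕ × ℕ | T p.1 p.2 = (m + 1) + 1}.ncard :=
              Set.ncard_le_ncard hsub1 (hTrow_fin (m + 1))
          _ = B (m + 1) := hTrow_ncard (m + 1)
          _ ≤ B m := hBmono m (m + 1) (by omega)
          _ = {p : ℕ × ℕ | T p.1 p.2 = m + 1}.ncard := (hTrow_ncard m).symm
          _ ≤ {p : ℕ × ℕ | T p.1 p.2 = m + 1 ∧ ReadingLE p.1 p.2 r c}.ncard :=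
              Set.ncard_le_ncard hsub2 hfin2
  -- finiteness of the set of all LR tableaux of this shape and content
  have hpart0 : ∀ i, part lam i ≤ part lam 0 := by
    intro i
    rcases Nat.eq_zero_or_pos i with rfl | hi
    · exact le_refl _
    rcases lt_or_ge i (2 * k) with h | h
    · exact le_of_lt (hdec 0 i hi h)
    · rw [hzero i h]; exact Nat.zero_le _
  have hskewfin : {p : ℕ × ℕ | InSkew lam (distAlpha k lam) p.1 p.2}.Finite := by
    apply Set.Finite.subset ((Set.finite_Iio (2 * k)).prod (Set.finite_Iio (part lam 0)))
    rintro ⟨i, j⟩ ⟨h1, h2⟩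
    constructor
    · simp only [Set.mem_Iio]
      by_contra hc
      rw [hzero i (by omega)] at h2
      omega
    · simp only [Set.mem_Iio]
      exact lt_of_lt_of_le h2 (hpart0 i)
  have hbound : ∀ S, IsLRTableau lam (distAlpha k lam) (distBeta k lam) S →
      ∀ i j, S i j ≤ 2 * k := by
    intro S hS i j
    by_contra hc
    push_neg at hc
    set v := S i j with hv
    have hfin : {p : ℕ × ℕ | S p.1 p.2 = (v - 1) + 1}.Finite := by
      apply hskewfin.subset
      intro p hp
      exact (hS.support p.1 p.2).mp (by simp only [Set.mem_setOf_eq] at hp; omega)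
    have hcard := hS.content (v - 1)
    have hBv : part (distBeta k lam) (v - 1) = 0 := by
      unfold part
      rw [List.getD_eq_default]
      unfold distBeta
      rw [List.length_map, List.length_range]
      omega
    rw [hBv] at hcard
    rw [Set.ncard_eq_zero hfin] at hcard
    have : (i, j) ∈ {p : ℕ × ℕ | S p.1 p.2 = (v - 1) + 1} := by
      simp only [Set.mem_setOf_eq]; omega
    rw [hcard] at this
    exact this
  have hfinset : {S : ℕ → ℕ → ℕ | IsLRTableau lam (distAlpha k lam) (distBeta k lam) S}.Finite := by
    set Φ : (ℕ → ℕ → ℕ) → (Fin (2 * k) × Fin (part lam 0) → Fin (2 * k + 1)) :=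
      fun S p => ⟨min (S p.1.val p.2.val) (2 * k), Nat.lt_succ_of_le (min_le_right _ _)⟩ with hΦ
    apply Set.Finite.of_finite_image (f := Φ)
    · exact Set.toFinite _
    · intro S hS S' hS' hSS
      simp only [Set.mem_setOf_eq] at hS hS'
      funext i j
      by_cases hc : InSkew lam (distAlpha k lam) i j
      · have hi : i < 2 * k := by
          by_contra hcc
          have := hc.2
          rw [hzero i (by omega)] at this
          omega
        have hj : j < part lam 0 := lt_of_lt_of_le hc.2 (hpart0 i)
        have := congrFun hSS ⟨⟨i, hi⟩, ⟨j, hj⟩⟩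
        rw [hΦ] at this
        simp only [Fin.mk.injEq] at this
        have b1 := hbound S hS i j
        have b2 := hbound S' hS' i j
        omega
      · have h1 : S i j = 0 := by
          by_contra hcc
          exact hc ((hS.support i j).mp (by omega))
        have h2 : S' i j = 0 := by
          by_contra hcc
          exact hc ((hS'.support i j).mp (by omega))
        rw [h1, h2]
  unfold lrCoeff
  rw [Nat.one_le_iff_ne_zero]
  intro hz
  rw [Set.ncard_eq_zero hfinset, Set.eq_empty_iff_forall_notMem] at hz
  exact hz T htab
end

section
/- Let k ≥ 1 and let λ = (λ_1, λ_2, …, λ_{2k}) be a partition with exactly 2k parts, all parts odd and pairwise distinct (so λ_1 > λ_2 > ⋯ > λ_{2k} > 0). Define α = ((λ_1+1)/2, …, (λ_k+1)/2, (λ_{k+1}−1)/2, …, (λ_{2k}−1)/2). Then the Littlewood–Richardson coefficient c^λ_{αα} is at least 1. -/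
namespace LRAux

/-- The cells of row `i` with columns in `[a, b)`. -/
def rowSet (i a b : ℕ) : Set (ℕ × ℕ) := {p | p.1 = i ∧ a ≤ p.2 ∧ p.2 < b}

lemma rowSet_eq (i a b : ℕ) : rowSet i a b = (fun j => (i, j)) '' Set.Ico a b := by
  ext p
  simp only [rowSet, Set.mem_setOf_eq, Set.mem_image, Set.mem_Ico, Prod.ext_iff]
  constructor
  · rintro ⟨h1, h2, h3⟩; exact ⟨p.2, ⟨h2, h3⟩, h1.symm, rfl⟩
  · rintro ⟨j, hj, h1, h2⟩
    exact ⟨h1.symm, by rw [← h2]; exact hj.1, by rw [← h2]; exact hj.2⟩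

lemma rowSet_finite (i a b : ℕ) : (rowSet i a b).Finite := by
  rw [rowSet_eq]; exact (Set.finite_Ico a b).image _

lemma rowSet_ncard (i a b : ℕ) : (rowSet i a b).ncard = b - a := by
  rw [rowSet_eq, Set.ncard_image_of_injective _
    (fun x y h => by simpa using congrArg Prod.snd h)]
  rw [show (Set.Ico a b : Set ℕ) = ↑(Finset.Ico a b) by simp, Set.ncard_coe_finset]
  simp

/-- Shorthand for the `i`-th part of `distAlpha k lam`. -/
def av (k : ℕ) (lam : List ℕ) (i : ℕ) : ℕ := part (distAlpha k lam) i

/-- The explicit LR tableau of shape `lam / distAlpha k lam` and content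
`distAlpha k lam`: row `i < k` is filled with `i+1`; in row `i ≥ k` the
leftmost cell gets `2k - i` and the remaining cells get `i + 1`. -/
def tab (k : ℕ) (lam : List ℕ) (i j : ℕ) : ℕ :=
  if i < 2 * k ∧ av k lam i ≤ j ∧ j < part lam i then
    (if k ≤ i ∧ j = av k lam i then 2 * k - i else i + 1)
  else 0

end LRAux


/-- For a partition `λ` with exactly `2k` parts, all odd and pairwise
distinct, one has `c^λ_{αα} ≥ 1`. -/
theorem one_le_lrCoeff_distAlpha_distAlpha
    (k : ℕ) (hk : 1 ≤ k) (lam : List ℕ)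
    (hlen : lam.length = 2 * k)
    (hsort : lam.Pairwise (· > ·))
    (hodd : ∀ x ∈ lam, Odd x) :
    1 ≤ lrCoeff lam (distAlpha k lam) (distAlpha k lam) := by
  classical
  -- basic facts about parts
  have hb0 : ∀ i, 2 * k ≤ i → part lam i = 0 := by
    intro i hi; exact List.getD_eq_default _ _ (by omega)
  have hbodd : ∀ i, i < 2 * k → Odd (part lam i) := by
    intro i hi
    have hi' : i < lam.length := by omega
    rw [part, List.getD_eq_getElem _ _ hi']
    exact hodd _ (List.getElem_mem hi')
  have hbpos : ∀ i, i < 2 * k → 1 ≤ part lam i := by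
    intro i hi; obtain ⟨t, ht⟩ := hbodd i hi; omega
  have hbdec : ∀ i j, i < j → j < 2 * k → part lam j < part lam i := by
    intro i j hij hj
    have hi' : i < lam.length := by omega
    have hj' : j < lam.length := by omega
    rw [part, part, List.getD_eq_getElem _ _ hi', List.getD_eq_getElem _ _ hj']
    exact List.pairwise_iff_getElem.mp hsort i j hi' hj' hij
  have hallen : (distAlpha k lam).length = 2 * k := by simp [distAlpha]
  have hav : ∀ i, i < 2 * k →
      LRAux.av k lam i = if i < k then (part lam i + 1) / 2 else (part lam i - 1) / 2 := by
    intro i hi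
    simp [LRAux.av, part, distAlpha, List.getD_eq_getElem?_getD, List.getElem?_map,
      List.getElem?_range, hi]
  have hav0 : ∀ i, 2 * k ≤ i → LRAux.av k lam i = 0 := by
    intro i hi; exact List.getD_eq_default _ _ (by omega)
  have HA : ∀ i, i < k → 2 * LRAux.av k lam i = part lam i + 1 := by
    intro i hi
    have h2 : i < 2 * k := by omega
    obtain ⟨t, ht⟩ := hbodd i h2
    rw [hav i h2, if_pos hi, ht]; omega
  have HB : ∀ i, k ≤ i → i < 2 * k → 2 * LRAux.av k lam i + 1 = part lam i := by
    intro i hi h2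
    obtain ⟨t, ht⟩ := hbodd i h2
    rw [hav i h2, if_neg (by omega), ht]; omega
  have hadec : ∀ i j, i < j → j < 2 * k → LRAux.av k lam j < LRAux.av k lam i := by
    have step : ∀ i, i + 1 < 2 * k → LRAux.av k lam (i + 1) < LRAux.av k lam i := by
      intro i h
      have hb := hbdec i (i + 1) (by omega) h
      rcases lt_or_ge (i + 1) k with h1 | h1
      · have := HA i (by omega); have := HA (i + 1) h1; omega
      · rcases lt_or_ge i k with h2 | h2
        · have := HA i h2; have := HB (i + 1) h1 h; omega
        · have := HB i h2 (by omega); have := HB (i + 1) h1 h; omega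
    intro i j hij hj
    induction j with
    | zero => omega
    | succ m ih =>
      rcases Nat.lt_succ_iff_lt_or_eq.mp hij with h | h
      · exact lt_trans (step m hj) (ih h (by omega))
      · subst h; exact step _ hj
  have hab : ∀ i, LRAux.av k lam i ≤ part lam i := by
    intro i
    rcases lt_or_ge i (2 * k) with h | h
    · rcases lt_or_ge i k with h1 | h1
      · have := HA i h1; have := hbpos i h; omega
      · have := HB i h1 h; omega
    · rw [hav0 i h, hb0 i h]
  have hskew : ∀ i j, InSkew lam (distAlpha k lam) i j ↔
      (i < 2 * k ∧ LRAux.av k lam i ≤ j ∧ j < part lam i) := by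
    intro i j
    constructor
    · rintro ⟨h1, h2⟩
      have hi : i < 2 * k := by
        by_contra h
        rw [hb0 i (by omega)] at h2; omega
      exact ⟨hi, h1, h2⟩
    · rintro ⟨_, h1, h2⟩; exact ⟨h1, h2⟩
  -- fibers of the tableau
  have hfib1 : ∀ v, 1 ≤ v → v ≤ k →
      {p : ℕ × ℕ | LRAux.tab k lam p.1 p.2 = v} =
        LRAux.rowSet (v - 1) (LRAux.av k lam (v - 1)) (part lam (v - 1)) ∪
          {(2 * k - v, LRAux.av k lam (2 * k - v))} := by
    intro v h1 h2
    ext ⟨i, j⟩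
    simp only [Set.mem_setOf_eq, LRAux.rowSet, Set.mem_union, Set.mem_singleton_iff,
      Prod.mk.injEq]
    constructor
    · intro hT
      rw [LRAux.tab] at hT
      by_cases hc1 : i < 2 * k ∧ LRAux.av k lam i ≤ j ∧ j < part lam i
      · rw [if_pos hc1] at hT
        by_cases hc2 : k ≤ i ∧ j = LRAux.av k lam i
        · rw [if_pos hc2] at hT
          right
          have hi : i = 2 * k - v := by omega
          exact ⟨hi, by rw [← hi]; exact hc2.2⟩
        · rw [if_neg hc2] at hT
          left
          have hi : i = v - 1 := by omega
          subst hi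
          exact ⟨rfl, hc1.2.1, hc1.2.2⟩
      · rw [if_neg hc1] at hT; omega
    · rintro (⟨hi, hj1, hj2⟩ | ⟨hi, hj⟩)
      · subst hi
        rw [LRAux.tab, if_pos ⟨by omega, hj1, hj2⟩, if_neg (by rintro ⟨hc, -⟩; omega)]
        omega
      · subst hi; subst hj
        have hkle : k ≤ 2 * k - v := by omega
        have hlt : 2 * k - v < 2 * k := by omega
        have := HB (2 * k - v) hkle hlt
        rw [LRAux.tab, if_pos ⟨hlt, le_refl _, by omega⟩, if_pos ⟨hkle, rfl⟩]
        omega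
  have hfib2 : ∀ v, k < v → v ≤ 2 * k →
      {p : ℕ × ℕ | LRAux.tab k lam p.1 p.2 = v} =
        LRAux.rowSet (v - 1) (LRAux.av k lam (v - 1) + 1) (part lam (v - 1)) := by
    intro v h1 h2
    ext ⟨i, j⟩
    simp only [Set.mem_setOf_eq, LRAux.rowSet]
    constructor
    · intro hT
      rw [LRAux.tab] at hT
      by_cases hc1 : i < 2 * k ∧ LRAux.av k lam i ≤ j ∧ j < part lam i
      · rw [if_pos hc1] at hT
        by_cases hc2 : k ≤ i ∧ j = LRAux.av k lam i
        · rw [if_pos hc2] at hT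
          exfalso; omega
        · rw [if_neg hc2] at hT
          have hi : i = v - 1 := by omega
          subst hi
          have hne : j ≠ LRAux.av k lam (v - 1) := fun hj => hc2 ⟨by omega, hj⟩
          refine ⟨rfl, by omega, hc1.2.2⟩
      · rw [if_neg hc1] at hT; omega
    · rintro ⟨hi, hj1, hj2⟩
      subst hi
      rw [LRAux.tab, if_pos ⟨by omega, by omega, hj2⟩, if_neg (by rintro ⟨-, hj⟩; omega)]
      omega
  have hfib3 : ∀ v, 2 * k < v →
      {p : ℕ × ℕ | LRAux.tab k lam p.1 p.2 = v} = ∅ := by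
    intro v hv
    ext ⟨i, j⟩
    simp only [Set.mem_setOf_eq, Set.mem_empty_iff_false, iff_false]
    intro hT
    rw [LRAux.tab] at hT
    split_ifs at hT <;> omega
  have hfibfin : ∀ v, 1 ≤ v → {p : ℕ × ℕ | LRAux.tab k lam p.1 p.2 = v}.Finite := by
    intro v hv
    rcases le_or_gt v k with h | h
    · rw [hfib1 v hv h]
      exact (LRAux.rowSet_finite _ _ _).union (Set.finite_singleton _)
    · rcases le_or_gt v (2 * k) with h2 | h2
      · rw [hfib2 v h h2]; exact LRAux.rowSet_finite _ _ _
      · rw [hfib3 v h2]; exact Set.finite_empty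
  have hcard : ∀ v, 1 ≤ v →
      {p : ℕ × ℕ | LRAux.tab k lam p.1 p.2 = v}.ncard = LRAux.av k lam (v - 1) := by
    intro v hv
    rcases le_or_gt v k with h | h
    · rw [hfib1 v hv h]
      have hdisj : Disjoint
          (LRAux.rowSet (v - 1) (LRAux.av k lam (v - 1)) (part lam (v - 1)))
          ({(2 * k - v, LRAux.av k lam (2 * k - v))} : Set (ℕ × ℕ)) := by
        rw [Set.disjoint_singleton_right]
        rintro ⟨h1, -⟩
        simp only at h1
        omega
      rw [Set.ncard_union_eq hdisj (LRAux.rowSet_finite _ _ _) (Set.finite_singleton _),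
        LRAux.rowSet_ncard, Set.ncard_singleton]
      have := HA (v - 1) (by omega)
      omega
    · rcases le_or_gt v (2 * k) with h2 | h2
      · rw [hfib2 v h h2, LRAux.rowSet_ncard]
        have := HB (v - 1) (by omega) (by omega)
        omega
      · rw [hfib3 v h2, Set.ncard_empty, hav0 (v - 1) (by omega)]
  have tv1 : ∀ i j, (i < 2 * k ∧ LRAux.av k lam i ≤ j ∧ j < part lam i) →
      ¬(k ≤ i ∧ j = LRAux.av k lam i) → LRAux.tab k lam i j = i + 1 := by
    intro i j h1 h2; rw [LRAux.tab, if_pos h1, if_neg h2]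
  have tv2 : ∀ i j, (i < 2 * k ∧ LRAux.av k lam i ≤ j ∧ j < part lam i) →
      (k ≤ i ∧ j = LRAux.av k lam i) → LRAux.tab k lam i j = 2 * k - i := by
    intro i j h1 h2; rw [LRAux.tab, if_pos h1, if_pos h2]
  -- the tableau is an LR tableau
  have hT_is : IsLRTableau lam (distAlpha k lam) (distAlpha k lam) (LRAux.tab k lam) := by
    refine ⟨?_, ?_, ?_, ?_, ?_, ?_⟩
    · exact hab
    · intro i j
      rw [hskew]
      by_cases hc1 : i < 2 * k ∧ LRAux.av k lam i ≤ j ∧ j < part lam i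
      · rw [LRAux.tab, if_pos hc1]
        by_cases hc2 : k ≤ i ∧ j = LRAux.av k lam i
        · rw [if_pos hc2]
          constructor
          · intro _; exact hc1
          · intro _; omega
        · rw [if_neg hc2]
          constructor
          · intro _; exact hc1
          · intro _; omega
      · rw [LRAux.tab, if_neg hc1]
        constructor
        · intro h; omega
        · intro h; exact absurd h hc1
    · intro i j j' hj hj' hle
      rw [hskew] at hj hj'
      obtain ⟨hi, hj1, hj2⟩ := hj
      obtain ⟨-, hj1', hj2'⟩ := hj'
      by_cases h2 : k ≤ i ∧ j = LRAux.av k lam i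
      · by_cases h2' : k ≤ i ∧ j' = LRAux.av k lam i
        · rw [tv2 i j ⟨hi, hj1, hj2⟩ h2, tv2 i j' ⟨hi, hj1', hj2'⟩ h2']
        · rw [tv2 i j ⟨hi, hj1, hj2⟩ h2, tv1 i j' ⟨hi, hj1', hj2'⟩ h2']; omega
      · by_cases h2' : k ≤ i ∧ j' = LRAux.av k lam i
        · exact absurd ⟨h2'.1, by omega⟩ h2
        · rw [tv1 i j ⟨hi, hj1, hj2⟩ h2, tv1 i j' ⟨hi, hj1', hj2'⟩ h2']
    · intro i i' j hij hij' hlt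
      rw [hskew] at hij hij'
      obtain ⟨hi, hj1, hj2⟩ := hij
      obtain ⟨hi', hj1', hj2'⟩ := hij'
      by_cases h2' : k ≤ i' ∧ j = LRAux.av k lam i'
      · exfalso
        have := hadec i i' hlt hi'
        omega
      · rw [tv1 i' j ⟨hi', hj1', hj2'⟩ h2']
        by_cases h2 : k ≤ i ∧ j = LRAux.av k lam i
        · rw [tv2 i j ⟨hi, hj1, hj2⟩ h2]; omega
        · rw [tv1 i j ⟨hi, hj1, hj2⟩ h2]; omega
    · intro K
      have := hcard (K + 1) (by omega)
      simpa [LRAux.av] using this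
    · intro r c K
      rcases le_or_gt (2 * k) (K + 1) with h | h
      · have he : {p : ℕ × ℕ | LRAux.tab k lam p.1 p.2 = K + 2 ∧
            ReadingLE p.1 p.2 r c} = ∅ := by
          ext p
          simp only [Set.mem_setOf_eq, Set.mem_empty_iff_false, iff_false, not_and]
          intro hT
          exfalso
          have hp : p ∈ {q : ℕ × ℕ | LRAux.tab k lam q.1 q.2 = K + 2} := hT
          rw [hfib3 (K + 2) (by omega)] at hp
          exact hp
        rw [he, Set.ncard_empty]
        omega
      · rcases lt_or_ge r (K + 1) with hr | hr
        · have he : {p : ℕ × ℕ | LRAux.tab k lam p.1 p.2 = K + 2 ∧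
              ReadingLE p.1 p.2 r c} = ∅ := by
            ext ⟨i, j⟩
            simp only [Set.mem_setOf_eq, Set.mem_empty_iff_false, iff_false, not_and]
            intro hT hR
            have hrow : K + 1 ≤ i := by
              rw [LRAux.tab] at hT
              split_ifs at hT <;> omega
            rcases hR with h' | ⟨h', -⟩ <;> omega
          rw [he, Set.ncard_empty]
          omega
        · -- main case: r ≥ K + 1 and K + 1 < 2k
          have hstep1 : {p : ℕ × ℕ | LRAux.tab k lam p.1 p.2 = K + 2 ∧
              ReadingLE p.1 p.2 r c}.ncard ≤
              {p : ℕ × ℕ | LRAux.tab k lam p.1 p.2 = K + 2}.ncard :=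
            Set.ncard_le_ncard (fun p hp => hp.1) (hfibfin (K + 2) (by omega))
          have hstep2 : {p : ℕ × ℕ | LRAux.tab k lam p.1 p.2 = K + 2}.ncard =
              LRAux.av k lam (K + 1) := by
            have := hcard (K + 2) (by omega)
            simpa using this
          have hRHSfin : {p : ℕ × ℕ | LRAux.tab k lam p.1 p.2 = K + 1 ∧
              ReadingLE p.1 p.2 r c}.Finite :=
            (hfibfin (K + 1) (by omega)).subset (fun p hp => hp.1)
          rcases le_or_gt (K + 1) k with hm | hm
          · -- generic row of value K+1 is row K with K < k
            have hsub : LRAux.rowSet K (LRAux.av k lam K) (part lam K) ⊆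
                {p : ℕ × ℕ | LRAux.tab k lam p.1 p.2 = K + 1 ∧
                  ReadingLE p.1 p.2 r c} := by
              intro p hp
              have hi : p.1 = K := hp.1
              have hj1 : LRAux.av k lam K ≤ p.2 := hp.2.1
              have hj2 : p.2 < part lam K := hp.2.2
              have ht : LRAux.tab k lam p.1 p.2 = K + 1 := by
                rw [hi]
                exact tv1 K p.2 ⟨by omega, hj1, hj2⟩ (by rintro ⟨hc, -⟩; omega)
              exact ⟨ht, Or.inl (by omega)⟩
            have hsz : (LRAux.rowSet K (LRAux.av k lam K) (part lam K)).ncard =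
                part lam K - LRAux.av k lam K := LRAux.rowSet_ncard _ _ _
            have hnum : LRAux.av k lam (K + 1) ≤ part lam K - LRAux.av k lam K := by
              have h1 := HA K (by omega)
              have h2 := hadec K (K + 1) (by omega) (by omega)
              omega
            calc {p : ℕ × ℕ | LRAux.tab k lam p.1 p.2 = K + 2 ∧
                  ReadingLE p.1 p.2 r c}.ncard
                ≤ LRAux.av k lam (K + 1) := by rw [← hstep2]; exact hstep1
              _ ≤ part lam K - LRAux.av k lam K := hnum
              _ = (LRAux.rowSet K (LRAux.av k lam K) (part lam K)).ncard := hsz.symm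
              _ ≤ _ := Set.ncard_le_ncard hsub hRHSfin
          · -- generic row of value K+1 is row K with k ≤ K
            have hsub : LRAux.rowSet K (LRAux.av k lam K + 1) (part lam K) ⊆
                {p : ℕ × ℕ | LRAux.tab k lam p.1 p.2 = K + 1 ∧
                  ReadingLE p.1 p.2 r c} := by
              intro p hp
              have hi : p.1 = K := hp.1
              have hj1 : LRAux.av k lam K + 1 ≤ p.2 := hp.2.1
              have hj2 : p.2 < part lam K := hp.2.2
              have ht : LRAux.tab k lam p.1 p.2 = K + 1 := by
                rw [hi]
                exact tv1 K p.2 ⟨by omega, by omega, hj2⟩ (by rintro ⟨-, hj⟩; omega)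
              exact ⟨ht, Or.inl (by omega)⟩
            have hsz : (LRAux.rowSet K (LRAux.av k lam K + 1) (part lam K)).ncard =
                part lam K - (LRAux.av k lam K + 1) := LRAux.rowSet_ncard _ _ _
            have hnum : LRAux.av k lam (K + 1) ≤ part lam K - (LRAux.av k lam K + 1) := by
              have h1 := HB K (by omega) (by omega)
              have h2 := hadec K (K + 1) (by omega) (by omega)
              omega
            calc {p : ℕ × ℕ | LRAux.tab k lam p.1 p.2 = K + 2 ∧
                  ReadingLE p.1 p.2 r c}.ncard
                ≤ LRAux.av k lam (K + 1) := by rw [← hstep2]; exact hstep1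
              _ ≤ part lam K - (LRAux.av k lam K + 1) := hnum
              _ = (LRAux.rowSet K (LRAux.av k lam K + 1) (part lam K)).ncard := hsz.symm
              _ ≤ _ := Set.ncard_le_ncard hsub hRHSfin
  -- finiteness of the set of LR tableaux
  set M : ℕ := lam.sum + 1 with hM
  have hbsum : ∀ i, part lam i ≤ lam.sum := by
    intro i
    rcases lt_or_ge i lam.length with h | h
    · rw [part, List.getD_eq_getElem _ _ h]
      exact List.single_le_sum (fun x _ => Nat.zero_le x) _ (List.getElem_mem h)
    · rw [part, List.getD_eq_default _ _ h]; exact Nat.zero_le _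
  have hbox : ∀ T0 : ℕ → ℕ → ℕ, IsLRTableau lam (distAlpha k lam) (distAlpha k lam) T0 →
      ∀ i j, 0 < T0 i j → i < 2 * k ∧ j < M := by
    intro T0 h0 i j hpos
    have := (h0.support i j).mp hpos
    rw [hskew] at this
    have := hbsum i
    omega
  have hbound : ∀ T0 : ℕ → ℕ → ℕ, IsLRTableau lam (distAlpha k lam) (distAlpha k lam) T0 →
      ∀ i j, T0 i j ≤ 2 * k := by
    intro T0 h0 i j
    by_contra hle
    push_neg at hle
    have hfin : {p : ℕ × ℕ | T0 p.1 p.2 = T0 i j}.Finite := by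
      apply Set.Finite.subset ((Set.finite_Iio (2 * k)).prod (Set.finite_Iio M))
      rintro ⟨x, y⟩ hxy
      have hpos : 0 < T0 x y := by
        simp only [Set.mem_setOf_eq] at hxy
        omega
      exact hbox T0 h0 x y hpos
    have hc := h0.content (T0 i j - 1)
    rw [show T0 i j - 1 + 1 = T0 i j from by omega] at hc
    have h0' : part (distAlpha k lam) (T0 i j - 1) = 0 :=
      List.getD_eq_default _ _ (by omega)
    have hpos : 0 < {p : ℕ × ℕ | T0 p.1 p.2 = T0 i j}.ncard :=
      (Set.ncard_pos hfin).mpr ⟨(i, j), rfl⟩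
    omega
  have hSfin : {T0 : ℕ → ℕ → ℕ |
      IsLRTableau lam (distAlpha k lam) (distAlpha k lam) T0}.Finite := by
    apply Set.Finite.of_finite_image
      (f := fun T0 => fun p : Fin (2 * k) × Fin M =>
        (⟨min (T0 p.1.val p.2.val) (2 * k), by omega⟩ : Fin (2 * k + 1)))
    · exact Set.toFinite _
    · rintro T1 hT1 T2 hT2 hEq
      funext i j
      by_cases hb : i < 2 * k ∧ j < M
      · have := congrFun hEq (⟨i, hb.1⟩, ⟨j, hb.2⟩)
        simp only [Fin.mk.injEq] at this
        have b1 := hbound T1 hT1 i j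
        have b2 := hbound T2 hT2 i j
        omega
      · have h1 : T1 i j = 0 := by
          by_contra h
          exact hb (hbox T1 hT1 i j (by omega))
        have h2 : T2 i j = 0 := by
          by_contra h
          exact hb (hbox T2 hT2 i j (by omega))
        rw [h1, h2]
    
  have : 0 < {T0 : ℕ → ℕ → ℕ |
      IsLRTableau lam (distAlpha k lam) (distAlpha k lam) T0}.ncard :=
    (Set.ncard_pos hSfin).mpr ⟨LRAux.tab k lam, hT_is⟩
  exact this
end

section
/- Let λ be a partition with an even number ℓ(λ) = 2k of parts, all parts odd and pairwise distinct. Then the Newell–Littlewood coefficient N^λ_{λλ} is at least 1. (This is the combinatorial content of the proposition that the representation ⊗³ detects the subgroup 𝕊_{∥λ∥}(G) of GL_N for G of type B_n, C_n, or D_{2n} when λ has an even number of parts, all distinct and odd.) -/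
-- basic lemmas about `part`
theorem part_eq_zero_of_ge (l : List ℕ) {i : ℕ} (h : l.length ≤ i) : part l i = 0 :=
  List.getD_eq_default _ _ h

theorem part_lt_length {l : List ℕ} {i : ℕ} (h : 0 < part l i) : i < l.length := by
  by_contra hc
  rw [part_eq_zero_of_ge l (Nat.le_of_not_lt hc)] at h
  omega

theorem part_mem {l : List ℕ} {i : ℕ} (h : i < l.length) : part l i ∈ l := by
  rw [part, List.getD_eq_getElem _ _ h]
  exact List.getElem_mem h

theorem part_pos_of_lt {l : List ℕ} (hl : IsPartition l) {i : ℕ} (h : i < l.length) :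
    0 < part l i := hl.2 _ (part_mem h)

theorem part_anti_s8 {l : List ℕ} (hl : IsPartition l) {i j : ℕ} (h : i ≤ j) :
    part l j ≤ part l i := by
  rcases Nat.lt_or_ge j l.length with hj | hj
  · have hi : i < l.length := lt_of_le_of_lt h hj
    rw [part, part, List.getD_eq_getElem _ _ hj, List.getD_eq_getElem _ _ hi]
    rcases Nat.eq_or_lt_of_le h with rfl | hlt
    · exact le_refl _
    · exact hl.1.rel_get_of_lt (a := ⟨i, hi⟩) (b := ⟨j, hj⟩) hlt
  · rw [part_eq_zero_of_ge l hj]; exact Nat.zero_le _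

theorem part_strict_anti {l : List ℕ} (hl : IsPartition l) (hd : l.Nodup)
    {i j : ℕ} (h : i < j) (hj : j < l.length) : part l j < part l i := by
  have hle := part_anti_s8 hl (Nat.le_of_lt h)
  rcases Nat.eq_or_lt_of_le hle with heq | hlt
  · exfalso
    have hi : i < l.length := Nat.lt_trans h hj
    rw [part, part, List.getD_eq_getElem _ _ hj, List.getD_eq_getElem _ _ hi] at heq
    have : (⟨j, hj⟩ : Fin l.length) = ⟨i, hi⟩ := by
      exact hd.get_inj_iff.mp heq
    simp at this; omega
  · exact hlt

theorem part_inj {l l' : List ℕ} (hl : IsPartition l) (hl' : IsPartition l')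
    (h : ∀ i, part l i = part l' i) : l = l' := by
  have hlen : l.length = l'.length := by
    by_contra hne
    rcases Nat.lt_or_ge l.length l'.length with hc | hc
    · have h1 : part l' l.length > 0 := part_pos_of_lt hl' hc
      have h2 : part l l.length = 0 := part_eq_zero_of_ge l (le_refl _)
      rw [← h] at h1; omega
    · rcases Nat.lt_or_ge l'.length l.length with hc2 | hc2
      · have h1 : part l l'.length > 0 := part_pos_of_lt hl hc2
        have h2 : part l' l'.length = 0 := part_eq_zero_of_ge l' (le_refl _)
        rw [h] at h1; omega
      · omega
  apply List.ext_getElem hlen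
  intro i h1 h2
  have := h i
  rwa [part, part, List.getD_eq_getElem _ _ h1, List.getD_eq_getElem _ _ h2] at this

-- the half-rounding partition and the explicit tableau
namespace NLW

def hh (lam : List ℕ) (i : ℕ) : ℕ := part lam i / 2

def ss (lam : List ℕ) (i : ℕ) : ℕ :=
  if i < lam.length / 2 then hh lam i + 1 else hh lam i

def dlen (lam : List ℕ) : ℕ :=
  if 0 < lam.length ∧ ss lam (lam.length - 1) = 0 then lam.length - 1 else lam.length

def dlt (lam : List ℕ) : List ℕ := (List.range (dlen lam)).map (ss lam)

def TT (lam : List ℕ) (i j : ℕ) : ℕ :=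
  if i < lam.length ∧ ss lam i ≤ j ∧ j < part lam i then
    (if lam.length / 2 ≤ i ∧ j = ss lam i then i + 1 - lam.length / 2 else i + 1)
  else 0

section
variable {lam : List ℕ} (hlam : IsPartition lam) (hlen : Even lam.length)
  (hdist : lam.Nodup) (hodd : ∀ x ∈ lam, Odd x)

theorem two_kk (hlen : Even lam.length) : lam.length = 2 * (lam.length / 2) := by
  obtain ⟨r, hr⟩ := hlen; omega

theorem part_hh (hodd : ∀ x ∈ lam, Odd x) {i : ℕ} (h : i < lam.length) :
    part lam i = 2 * hh lam i + 1 := by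
  obtain ⟨c, hc⟩ := hodd _ (part_mem h)
  rw [hh, hc]; omega

theorem hh_lt (hlam : IsPartition lam) (hdist : lam.Nodup) (hodd : ∀ x ∈ lam, Odd x)
    {i j : ℕ} (h : i < j) (hj : j < lam.length) : hh lam j < hh lam i := by
  have h1 := part_strict_anti hlam hdist h hj
  have h2 := part_hh hodd hj
  have h3 := part_hh hodd (Nat.lt_trans h hj)
  omega

theorem ss_lt (hlam : IsPartition lam) (hdist : lam.Nodup) (hodd : ∀ x ∈ lam, Odd x)
    {i j : ℕ} (h : i < j) (hj : j < lam.length) : ss lam j < ss lam i := by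
  have h1 := hh_lt hlam hdist hodd h hj
  unfold ss; split_ifs <;> omega

theorem ss_le_part {i : ℕ} (hodd : ∀ x ∈ lam, Odd x) (h : i < lam.length) :
    ss lam i ≤ part lam i := by
  have := part_hh hodd h
  unfold ss; split_ifs <;> omega

theorem ss_lt_part {i : ℕ} (hodd : ∀ x ∈ lam, Odd x) (h : i < lam.length)
    (hk : lam.length / 2 ≤ i) : ss lam i < part lam i := by
  have := part_hh hodd h
  unfold ss; split_ifs <;> omega

theorem part_dlt (hlam : IsPartition lam) (hdist : lam.Nodup) (hodd : ∀ x ∈ lam, Odd x)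
    (i : ℕ) : part (dlt lam) i = if i < lam.length then ss lam i else 0 := by
  have hdl : (dlt lam).length = dlen lam := by simp [dlt]
  have hdlen_le : dlen lam ≤ lam.length := by unfold dlen; split_ifs <;> omega
  split_ifs with hi
  · rcases Nat.lt_or_ge i (dlen lam) with hL | hL
    · rw [part, dlt, List.getD_eq_getElem _ _ (by simpa using hL)]
      simp
    · -- i ∈ [dlen, length): only possible if dlen = length - 1 and i = length - 1
      have h1 : dlen lam = lam.length - 1 ∧ 0 < lam.length ∧ ss lam (lam.length - 1) = 0 := by
        unfold dlen at hL ⊢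
        split_ifs at hL ⊢ with hc
        · exact ⟨rfl, hc⟩
        · omega
      have hi' : i = lam.length - 1 := by omega
      rw [part_eq_zero_of_ge _ (by omega), hi', h1.2.2]
  · exact part_eq_zero_of_ge (dlt lam) (by rw [hdl]; omega)

theorem dlt_isPartition (hlam : IsPartition lam) (hdist : lam.Nodup)
    (hodd : ∀ x ∈ lam, Odd x) : IsPartition (dlt lam) := by
  have hdlen_le : dlen lam ≤ lam.length := by unfold dlen; split_ifs <;> omega
  constructor
  · rw [dlt]
    rw [List.pairwise_map]
    apply List.Pairwise.imp_of_mem (R := (· < ·))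
    · intro a b ha hb hab
      have hb' : b < dlen lam := List.mem_range.mp hb
      exact Nat.le_of_lt (ss_lt hlam hdist hodd hab (by omega))
    · exact List.pairwise_lt_range
  · intro x hx
    rw [dlt] at hx
    obtain ⟨a, ha, rfl⟩ := List.mem_map.mp hx
    have ha' : a < dlen lam := List.mem_range.mp ha
    rcases Nat.lt_or_ge a (lam.length - 1) with h1 | h1
    · have h2 : ss lam (lam.length - 1) < ss lam a :=
        ss_lt hlam hdist hodd h1 (by omega)
      omega
    · -- a = length - 1 (and then dlen = length, so ss a ≠ 0), or length ≤ a impossible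
      have ha2 : a = lam.length - 1 := by omega
      have h3 : ¬(0 < lam.length ∧ ss lam (lam.length - 1) = 0) := by
        intro hc
        unfold dlen at ha'
        rw [if_pos hc] at ha'
        omega
      have h4 : 0 < lam.length := by omega
      rcases Nat.eq_zero_or_pos (ss lam a) with h5 | h5
      · exact absurd ⟨h4, by rw [← ha2]; exact h5⟩ h3
      · exact h5

end
end NLW

namespace NLW
section
variable {lam : List ℕ}

theorem row_set_eq (r a b : ℕ) :
    {p : ℕ × ℕ | p.1 = r ∧ a ≤ p.2 ∧ p.2 < b} = (fun j => (r, j)) '' Set.Ico a b := by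
  ext ⟨i, j⟩
  simp only [Set.mem_setOf_eq, Set.mem_image, Set.mem_Ico, Prod.mk.injEq]
  constructor
  · rintro ⟨rfl, h1, h2⟩; exact ⟨j, ⟨h1, h2⟩, rfl, rfl⟩
  · rintro ⟨x, ⟨h1, h2⟩, rfl, rfl⟩; exact ⟨rfl, h1, h2⟩

theorem row_set_finite (r a b : ℕ) :
    {p : ℕ × ℕ | p.1 = r ∧ a ≤ p.2 ∧ p.2 < b}.Finite := by
  rw [row_set_eq]; exact (Set.finite_Ico _ _).image _

theorem row_set_ncard (r a b : ℕ) :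
    {p : ℕ × ℕ | p.1 = r ∧ a ≤ p.2 ∧ p.2 < b}.ncard = b - a := by
  rw [row_set_eq, Set.ncard_image_of_injective _ (fun x y h => by simpa using h),
    ← Finset.coe_Ico, Set.ncard_coe_finset, Nat.card_Ico]

theorem inskew_iff (hlam : IsPartition lam) (hdist : lam.Nodup) (hodd : ∀ x ∈ lam, Odd x)
    {i j : ℕ} : InSkew lam (dlt lam) i j ↔
      i < lam.length ∧ ss lam i ≤ j ∧ j < part lam i := by
  unfold InSkew
  rw [part_dlt hlam hdist hodd]
  constructor
  · rintro ⟨h1, h2⟩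
    have him : i < lam.length := part_lt_length (by omega)
    rw [if_pos him] at h1
    exact ⟨him, h1, h2⟩
  · rintro ⟨h1, h2, h3⟩
    rw [if_pos h1]
    exact ⟨h2, h3⟩

theorem TT_eq_pos {i j : ℕ} (h : i < lam.length ∧ ss lam i ≤ j ∧ j < part lam i) :
    TT lam i j = if lam.length / 2 ≤ i ∧ j = ss lam i then i + 1 - lam.length / 2
      else i + 1 := if_pos h

theorem TT_subset (hlam : IsPartition lam) (hdist : lam.Nodup) (hodd : ∀ x ∈ lam, Odd x) :
    ∀ i, part (dlt lam) i ≤ part lam i := by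
  intro i
  rw [part_dlt hlam hdist hodd]
  split_ifs with h
  · exact ss_le_part hodd h
  · exact Nat.zero_le _

theorem TT_support (hlam : IsPartition lam) (hdist : lam.Nodup) (hodd : ∀ x ∈ lam, Odd x) :
    ∀ i j, 0 < TT lam i j ↔ InSkew lam (dlt lam) i j := by
  intro i j
  rw [inskew_iff hlam hdist hodd]
  unfold TT
  split_ifs with h1 h2
  · exact iff_of_true (by omega) h1
  · exact iff_of_true (by omega) h1
  · exact iff_of_false (by omega) h1

theorem TT_row_weak (hlam : IsPartition lam) (hdist : lam.Nodup) (hodd : ∀ x ∈ lam, Odd x) :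
    ∀ i j j', InSkew lam (dlt lam) i j → InSkew lam (dlt lam) i j' → j ≤ j' →
      TT lam i j ≤ TT lam i j' := by
  intro i j j' hj hj' hle
  rw [inskew_iff hlam hdist hodd] at hj hj'
  rw [TT_eq_pos hj, TT_eq_pos hj']
  have h2 := hj.2.1
  split_ifs <;> omega

theorem TT_col_strict (hlam : IsPartition lam) (hdist : lam.Nodup) (hodd : ∀ x ∈ lam, Odd x) :
    ∀ i i' j, InSkew lam (dlt lam) i j → InSkew lam (dlt lam) i' j → i < i' →
      TT lam i j < TT lam i' j := by
  intro i i' j hj hj' hii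
  rw [inskew_iff hlam hdist hodd] at hj hj'
  have hss : ss lam i' < ss lam i := ss_lt hlam hdist hodd hii hj'.1
  rw [TT_eq_pos hj, TT_eq_pos hj']
  have h2 := hj.2.1
  split_ifs <;> omega

theorem TT_content (hlam : IsPartition lam) (hlen : Even lam.length) (hdist : lam.Nodup)
    (hodd : ∀ x ∈ lam, Odd x) :
    ∀ v : ℕ, {p : ℕ × ℕ | TT lam p.1 p.2 = v + 1}.ncard = part (dlt lam) v := by
  intro v
  have hm := two_kk hlen
  rw [part_dlt hlam hdist hodd]
  rcases Nat.lt_or_ge v (lam.length / 2) with hvk | hvk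
  · -- top value: row v plus special cell in row v + k
    have hvm : v < lam.length := by omega
    have hvkm : v + lam.length / 2 < lam.length := by omega
    have hpv := part_hh hodd hvm
    have hpk := part_hh hodd hvkm
    have hsv : ss lam v = hh lam v + 1 := if_pos hvk
    have hsk : ss lam (v + lam.length / 2) = hh lam (v + lam.length / 2) :=
      if_neg (by omega)
    have hset : {p : ℕ × ℕ | TT lam p.1 p.2 = v + 1} =
        {p : ℕ × ℕ | p.1 = v ∧ ss lam v ≤ p.2 ∧ p.2 < part lam v} ∪
          {(v + lam.length / 2, ss lam (v + lam.length / 2))} := by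
      ext ⟨i, j⟩
      simp only [Set.mem_setOf_eq, Set.mem_union, Set.mem_singleton_iff, Prod.mk.injEq]
      constructor
      · intro hT
        unfold TT at hT
        split_ifs at hT with h1 h2
        · right
          have hi : i = v + lam.length / 2 := by omega
          exact ⟨hi, by rw [h2.2, hi]⟩
        · left
          have hi : i = v := by omega
          rw [← hi]
          exact ⟨rfl, h1.2⟩
      · rintro (⟨h0, h1, h2⟩ | ⟨h0, h3⟩)
        · subst h0
          unfold TT
          rw [if_pos ⟨hvm, h1, h2⟩, if_neg (by omega)]
        · subst h0; subst h3
          unfold TT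
          rw [if_pos ⟨hvkm, le_refl _, by omega⟩, if_pos ⟨by omega, rfl⟩]
          omega
    rw [hset, Set.ncard_union_eq ?disj (row_set_finite _ _ _) (Set.finite_singleton _),
      row_set_ncard, Set.ncard_singleton]
    case disj =>
      rw [Set.disjoint_singleton_right]
      intro hmem
      have := hmem.1
      simp only at this
      omega
    rw [if_pos hvm]
    omega
  · rcases Nat.lt_or_ge v lam.length with hvm | hvm
    · -- bottom value: row v minus its leftmost (special) cell
      have hpv := part_hh hodd hvm
      have hsv : ss lam v = hh lam v := if_neg (by omega)
      have hset : {p : ℕ × ℕ | TT lam p.1 p.2 = v + 1} =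
          {p : ℕ × ℕ | p.1 = v ∧ ss lam v + 1 ≤ p.2 ∧ p.2 < part lam v} := by
        ext ⟨i, j⟩
        simp only [Set.mem_setOf_eq]
        constructor
        · intro hT
          unfold TT at hT
          split_ifs at hT with h1 h2
          · omega
          · have hi : i = v := by omega
            have hne : j ≠ ss lam i := fun hc => h2 ⟨by omega, hc⟩
            rw [← hi]
            exact ⟨rfl, by omega, h1.2.2⟩
        · rintro ⟨h0, h1, h2⟩
          subst h0
          unfold TT
          rw [if_pos ⟨hvm, by omega, h2⟩, if_neg (by omega)]
      rw [hset, row_set_ncard, if_pos hvm]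
      omega
    · -- value too large: empty
      have hset : {p : ℕ × ℕ | TT lam p.1 p.2 = v + 1} = ∅ := by
        ext ⟨i, j⟩
        simp only [Set.mem_setOf_eq, Set.mem_empty_iff_false, iff_false]
        intro hT
        unfold TT at hT
        split_ifs at hT with h1 h2
        · omega
        · omega
      rw [hset, Set.ncard_empty, if_neg (by omega)]

end
end NLW

namespace NLW
section
variable {lam : List ℕ}

def phi (lam : List ℕ) (p : ℕ × ℕ) : ℕ × ℕ :=
  if lam.length / 2 ≤ p.1 ∧ p.2 = ss lam p.1 then (p.1 - 1, ss lam (p.1 - 1))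
  else (p.1 - 1, p.2 + part lam (p.1 - 1) - part lam p.1)

theorem TT_level_cases {i j w : ℕ} (hT : TT lam i j = w + 1) :
    (i = w ∧ i < lam.length ∧ ss lam i ≤ j ∧ j < part lam i ∧
        ¬(lam.length / 2 ≤ i ∧ j = ss lam i)) ∨
      (lam.length / 2 ≤ i ∧ i < lam.length ∧ i + 1 - lam.length / 2 = w + 1 ∧
        j = ss lam i ∧ ss lam i < part lam i) := by
  unfold TT at hT
  split_ifs at hT with h1 h2
  · exact Or.inr ⟨h2.1, h1.1, hT, h2.2, by omega⟩
  · exact Or.inl ⟨by omega, h1.1, h1.2.1, h1.2.2, h2⟩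

theorem level_finite (hlam : IsPartition lam) (v r c : ℕ) :
    {p : ℕ × ℕ | TT lam p.1 p.2 = v + 1 ∧ ReadingLE p.1 p.2 r c}.Finite := by
  apply Set.Finite.subset ((Set.finite_Iio lam.length).prod
    (Set.finite_Iio (part lam 0)))
  rintro ⟨i, j⟩ ⟨hT, -⟩
  rcases TT_level_cases hT with ⟨-, h1, -, h2, -⟩ | ⟨-, h1, -, h2, h3⟩
  · exact ⟨h1, lt_of_lt_of_le h2 (part_anti_s8 hlam (Nat.zero_le i))⟩
  · exact ⟨h1, lt_of_lt_of_le (h2 ▸ h3) (part_anti_s8 hlam (Nat.zero_le i))⟩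

theorem TT_lattice (hlam : IsPartition lam) (hlen : Even lam.length) (hdist : lam.Nodup)
    (hodd : ∀ x ∈ lam, Odd x) :
    ∀ r c v : ℕ,
      {p : ℕ × ℕ | TT lam p.1 p.2 = v + 2 ∧ ReadingLE p.1 p.2 r c}.ncard ≤
        {p : ℕ × ℕ | TT lam p.1 p.2 = v + 1 ∧ ReadingLE p.1 p.2 r c}.ncard := by
  intro r c v
  have hm := two_kk hlen
  apply Set.ncard_le_ncard_of_injOn (phi lam) ?maps ?inj (level_finite hlam v r c)
  case maps =>
    rintro ⟨i, j⟩ ⟨hT, hR⟩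
    dsimp only at hT hR ⊢
    rcases TT_level_cases hT with ⟨hi, him, hj1, hj2, hns⟩ | ⟨hki, him, hiv, hjs, hsp⟩
    · -- normal cell in row i = v + 1
      have hipos : 0 < i := by omega
      have hvm : i - 1 < lam.length := by omega
      have hp0 := part_hh hodd hvm
      have hp1 := part_hh hodd him
      have hhlt := hh_lt hlam hdist hodd (show i - 1 < i by omega) him
      have hphi : phi lam (i, j) = (i - 1, j + part lam (i - 1) - part lam i) := by
        unfold phi
        exact if_neg hns
      rw [hphi]
      constructor
      · -- tableau value at the image cell is v + 1
        -- ss facts by cases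
        have hss1 : ss lam i = if i < lam.length / 2 then hh lam i + 1 else hh lam i := rfl
        have hssv : ss lam (i - 1) =
            if i - 1 < lam.length / 2 then hh lam (i - 1) + 1 else hh lam (i - 1) := rfl
        have hjlow : (i < lam.length / 2 ∧ hh lam i + 1 ≤ j) ∨
            (lam.length / 2 ≤ i ∧ hh lam i + 1 ≤ j) := by
          rcases Nat.lt_or_ge i (lam.length / 2) with hc | hc
          · left; refine ⟨hc, ?_⟩; rw [hss1, if_pos hc] at hj1; omega
          · right
            refine ⟨hc, ?_⟩
            rw [hss1, if_neg (by omega)] at hj1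
            have : j ≠ ss lam i := fun hc2 => hns ⟨hc, hc2⟩
            rw [hss1, if_neg (by omega)] at this
            omega
        rw [TT_eq_pos ⟨hvm, ?_, ?_⟩]
        · rw [if_neg ?_]
          · omega
          · -- image cell is not a special cell
            rintro ⟨hk1, hk2⟩
            rw [hssv, if_neg (by omega)] at hk2
            omega
        · -- ss lam (i-1) ≤ image column
          rw [hssv]; split_ifs with hc <;> omega
        · -- image column < part lam (i-1)
          omega
      · rcases hR with h | h
        · exact Or.inl (by omega)
        · exact Or.inl (by omega)
    · -- special cell: i = v + 1 + lam.length / 2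
      have hik : i = v + 1 + lam.length / 2 := by omega
      have hphi : phi lam (i, j) = (i - 1, ss lam (i - 1)) := by
        unfold phi
        exact if_pos ⟨hki, hjs⟩
      rw [hphi]
      have hi1m : i - 1 < lam.length := by omega
      have hki1 : lam.length / 2 ≤ i - 1 := by omega
      constructor
      · rw [TT_eq_pos ⟨hi1m, le_refl _, ss_lt_part hodd hi1m hki1⟩, if_pos ⟨hki1, rfl⟩]
        omega
      · rcases hR with h | h
        · exact Or.inl (by omega)
        · exact Or.inl (by omega)
  case inj =>
    rintro ⟨i, j⟩ ⟨hT, -⟩ ⟨i', j'⟩ ⟨hT', -⟩ heq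
    dsimp only at hT hT' heq ⊢
    have hfst := congrArg Prod.fst heq
    have hsnd := congrArg Prod.snd heq
    rcases TT_level_cases hT with ⟨hi, him, hj1, hj2, hns⟩ | ⟨hki, him, hiv, hjs, -⟩ <;>
      rcases TT_level_cases hT' with ⟨hi', him', hj1', hj2', hns'⟩ | ⟨hki', him', hiv', hjs', -⟩
    · -- both normal
      have h1 : i = i' := by omega
      subst h1
      have hphi : phi lam (i, j) = (i - 1, j + part lam (i - 1) - part lam i) := by
        unfold phi; exact if_neg hns
      have hphi' : phi lam (i, j') = (i - 1, j' + part lam (i - 1) - part lam i) := by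
        unfold phi; exact if_neg hns'
      rw [hphi, hphi'] at hsnd
      simp only at hsnd
      have hmono : part lam i ≤ part lam (i - 1) := part_anti_s8 hlam (by omega)
      have : j = j' := by omega
      simp [this]
    · -- normal vs special: images in different rows
      exfalso
      have hphi : phi lam (i, j) = (i - 1, j + part lam (i - 1) - part lam i) := by
        unfold phi; exact if_neg hns
      have hphi' : phi lam (i', j') = (i' - 1, ss lam (i' - 1)) := by
        unfold phi; exact if_pos ⟨hki', hjs'⟩
      rw [hphi, hphi'] at hfst
      simp only at hfst
      omega
    · exfalso
      have hphi : phi lam (i, j) = (i - 1, ss lam (i - 1)) := by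
        unfold phi; exact if_pos ⟨hki, hjs⟩
      have hphi' : phi lam (i', j') = (i' - 1, j' + part lam (i' - 1) - part lam i') := by
        unfold phi; exact if_neg hns'
      rw [hphi, hphi'] at hfst
      simp only at hfst
      omega
    · -- both special
      have h1 : i = i' := by omega
      subst h1
      rw [hjs, hjs']

end
end NLW

namespace NLW
section
variable {lam : List ℕ}

theorem TT_isLR (hlam : IsPartition lam) (hlen : Even lam.length) (hdist : lam.Nodup)
    (hodd : ∀ x ∈ lam, Odd x) : IsLRTableau lam (dlt lam) (dlt lam) (TT lam) where
  subset := TT_subset hlam hdist hodd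
  support := TT_support hlam hdist hodd
  row_weak := TT_row_weak hlam hdist hodd
  col_strict := TT_col_strict hlam hdist hodd
  content := TT_content hlam hlen hdist hodd
  lattice := TT_lattice hlam hlen hdist hodd

-- generic facts about LR tableaux, used for finiteness
theorem isLR_box {a b : List ℕ} {T : ℕ → ℕ → ℕ} (hlam : IsPartition lam)
    (h : IsLRTableau lam a b T) {i j : ℕ} (hT : T i j ≠ 0) :
    i < lam.length ∧ j < part lam 0 := by
  have h2 : InSkew lam a i j := (h.support i j).mp (by omega)
  obtain ⟨-, h3⟩ := h2
  exact ⟨part_lt_length (by omega), lt_of_lt_of_le h3 (part_anti_s8 hlam (Nat.zero_le i))⟩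

theorem isLR_level_finite {a b : List ℕ} {T : ℕ → ℕ → ℕ} (hlam : IsPartition lam)
    (h : IsLRTableau lam a b T) (v : ℕ) :
    {p : ℕ × ℕ | T p.1 p.2 = v + 1}.Finite := by
  apply Set.Finite.subset ((Set.finite_Iio lam.length).prod (Set.finite_Iio (part lam 0)))
  rintro ⟨i, j⟩ hT
  simp only [Set.mem_setOf_eq] at hT
  exact isLR_box hlam h (i := i) (j := j) (by
    intro hz
    rw [show T i j = T (i, j).1 (i, j).2 from rfl, hT] at hz
    omega)

theorem isLR_val_lt {a b : List ℕ} {T : ℕ → ℕ → ℕ} (hlam : IsPartition lam)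
    (hb : IsPartition b) (h : IsLRTableau lam a b T) (i j : ℕ) :
    T i j ≤ b.length := by
  rcases Nat.eq_zero_or_pos (T i j) with h0 | h0
  · omega
  · obtain ⟨v, hTv⟩ : ∃ v, T i j = v + 1 := ⟨T i j - 1, by omega⟩
    have hne : {p : ℕ × ℕ | T p.1 p.2 = v + 1}.Nonempty := ⟨(i, j), hTv⟩
    have hpos : 0 < part b v := by
      rw [← h.content v]
      exact (Set.ncard_pos (isLR_level_finite hlam h v)).mpr hne
    have := part_lt_length hpos
    omega

theorem isLR_finite (hlam : IsPartition lam) (hd : IsPartition (dlt lam)) :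
    {T : ℕ → ℕ → ℕ | IsLRTableau lam (dlt lam) (dlt lam) T}.Finite := by
  set s := {T : ℕ → ℕ → ℕ | IsLRTableau lam (dlt lam) (dlt lam) T}
  set N := (dlt lam).length
  rw [Set.finite_coe_iff.symm]
  have hinj : Function.Injective
      (fun (T : ↥s) (p : Fin lam.length × Fin (part lam 0)) =>
        (min (T.1 p.1.1 p.2.1) N : ℕ)) := by
    intro T1 T2 hf
    apply Subtype.ext
    funext i j
    rcases Nat.lt_or_ge i lam.length with hi | hi
    · rcases Nat.lt_or_ge j (part lam 0) with hj | hj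
      · have h1 := congrFun hf (⟨i, hi⟩, ⟨j, hj⟩)
        simp only at h1
        have b1 := isLR_val_lt hlam hd T1.2 i j
        have b2 := isLR_val_lt hlam hd T2.2 i j
        omega
      · -- outside the box: both zero
        have z1 : T1.1 i j = 0 := by
          by_contra hz
          exact absurd (isLR_box hlam T1.2 hz).2 (by omega)
        have z2 : T2.1 i j = 0 := by
          by_contra hz
          exact absurd (isLR_box hlam T2.2 hz).2 (by omega)
        rw [z1, z2]
    · have z1 : T1.1 i j = 0 := by
        by_contra hz
        exact absurd (isLR_box hlam T1.2 hz).1 (by omega)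
      have z2 : T2.1 i j = 0 := by
        by_contra hz
        exact absurd (isLR_box hlam T2.2 hz).1 (by omega)
      rw [z1, z2]
  -- ℕ-valued functions with values ≤ N from a finite domain: land in Fin (N+1)
  have hinj2 : Function.Injective
      (fun (T : ↥s) (p : Fin lam.length × Fin (part lam 0)) =>
        (⟨min (T.1 p.1.1 p.2.1) N, by omega⟩ : Fin (N + 1))) := by
    intro T1 T2 hf
    apply hinj
    funext p
    have := congrFun hf p
    simpa [Fin.ext_iff] using this
  exact Finite.of_injective _ hinj2

theorem one_le_lrCoeff (hlam : IsPartition lam) (hlen : Even lam.length)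
    (hdist : lam.Nodup) (hodd : ∀ x ∈ lam, Odd x) :
    1 ≤ lrCoeff lam (dlt lam) (dlt lam) := by
  have hfin := isLR_finite hlam (dlt_isPartition hlam hdist hodd)
  have := (Set.ncard_pos hfin).mpr ⟨TT lam, TT_isLR hlam hlen hdist hodd⟩
  unfold lrCoeff
  omega

end
end NLW

namespace NLW
section
variable {lam : List ℕ}

theorem exists_tableau {a b : List ℕ} (h : lrCoeff lam a b ≠ 0) :
    ∃ T, IsLRTableau lam a b T := by
  obtain ⟨T, hT⟩ := Set.nonempty_of_ncard_ne_zero h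
  exact ⟨T, hT⟩

theorem shape_bound (hlam : IsPartition lam) {a b : List ℕ} {T : ℕ → ℕ → ℕ}
    (h : IsLRTableau lam a b T) (hA : IsPartition a) :
    a.length ≤ lam.length ∧ ∀ i, part a i ≤ part lam 0 := by
  constructor
  · by_contra hc
    have h1 : 0 < part a lam.length := part_pos_of_lt hA (by omega)
    have h2 := h.subset lam.length
    rw [part_eq_zero_of_ge lam (le_refl _)] at h2
    omega
  · intro i
    exact le_trans (h.subset i) (part_anti_s8 hlam (Nat.zero_le i))

theorem content_bound (hlam : IsPartition lam) {a b : List ℕ} {T : ℕ → ℕ → ℕ}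
    (h : IsLRTableau lam a b T) (hB : IsPartition b) :
    b.length ≤ lam.length * part lam 0 ∧
      ∀ v, part b v ≤ lam.length * part lam 0 := by
  classical
  set Fbox : Finset (ℕ × ℕ) := Finset.range lam.length ×ˢ Finset.range (part lam 0)
    with hFbox
  have hboxcard : Fbox.card = lam.length * part lam 0 := by
    rw [hFbox, Finset.card_product, Finset.card_range, Finset.card_range]
  have hsub : ∀ v : ℕ, {p : ℕ × ℕ | T p.1 p.2 = v + 1} ⊆ ↑Fbox := by
    intro v
    rintro ⟨i, j⟩ hp
    simp only [Set.mem_setOf_eq] at hp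
    have := isLR_box hlam h (i := i) (j := j) (by
      intro hz
      rw [show T i j = T (i, j).1 (i, j).2 from rfl, hp] at hz
      omega)
    simp only [hFbox, Finset.coe_product, Set.mem_prod, Finset.mem_coe,
      Finset.mem_range]
    exact this
  have hpartle : ∀ v, part b v ≤ lam.length * part lam 0 := by
    intro v
    rw [← h.content v, ← hboxcard, ← Set.ncard_coe_finset]
    exact Set.ncard_le_ncard (hsub v) (Fbox.finite_toSet)
  refine ⟨?_, hpartle⟩
  -- choose a witness cell for each value 1, ..., b.length
  have hne : ∀ v < b.length, {p : ℕ × ℕ | T p.1 p.2 = v + 1}.Nonempty := by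
    intro v hv
    apply Set.nonempty_of_ncard_ne_zero
    rw [h.content v]
    have := part_pos_of_lt hB hv
    omega
  have hcard : (Finset.range b.length).card ≤ Fbox.card := by
    apply Finset.card_le_card_of_injOn
      (fun v => if hv : v < b.length then (hne v hv).some else (0, 0))
    · intro v hv
      rw [Finset.mem_coe, Finset.mem_range] at hv
      dsimp only; rw [dif_pos hv]
      exact hsub v (hne v hv).some_mem
    · intro v hv v' hv' heq
      rw [Finset.mem_coe, Finset.mem_range] at hv hv'
      dsimp only at heq
      rw [dif_pos hv, dif_pos hv'] at heq
      have e1 := (hne v hv).some_mem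
      have e2 := (hne v' hv').some_mem
      rw [heq] at e1
      simp only [Set.mem_setOf_eq] at e1 e2
      omega
  rwa [Finset.card_range, hboxcard] at hcard

theorem nl_support_finite (hlam : IsPartition lam) :
    (Function.support (fun x : {l : List ℕ // IsPartition l} ×
        {l : List ℕ // IsPartition l} × {l : List ℕ // IsPartition l} =>
      lrCoeff lam x.1.val x.2.1.val * lrCoeff lam x.1.val x.2.2.val *
        lrCoeff lam x.2.1.val x.2.2.val)).Finite := by
  classical
  set N := lam.length + lam.length * part lam 0 + part lam 0 + 1 with hN
  set Enc : List ℕ → (Fin N → Fin (N + 1)) :=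
    fun l v => ⟨min (part l v.1) N, by omega⟩ with hEnc
  -- on the support, every component has parts ≤ N and vanishing beyond N
  have hkey : ∀ l : List ℕ, IsPartition l → l.length ≤ N → (∀ v, part l v ≤ N) →
      ∀ l' : List ℕ, IsPartition l' → l'.length ≤ N → (∀ v, part l' v ≤ N) →
      Enc l = Enc l' → l = l' := by
    intro l hl hl1 hl2 l' hl' hl1' hl2' he
    apply part_inj hl hl'
    intro v
    rcases Nat.lt_or_ge v N with hv | hv
    · have := congrFun he ⟨v, hv⟩
      simp only [hEnc, Fin.mk.injEq] at this
      have b1 := hl2 v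
      have b2 := hl2' v
      omega
    · rw [part_eq_zero_of_ge l (by omega), part_eq_zero_of_ge l' (by omega)]
  apply Set.Finite.of_finite_image (f := fun x => (Enc x.1.1, Enc x.2.1.1, Enc x.2.2.1))
  · exact Set.toFinite _
  · rintro ⟨⟨a, ha⟩, ⟨b, hb⟩, ⟨g, hg⟩⟩ hx ⟨⟨a', ha'⟩, ⟨b', hb'⟩, ⟨g', hg'⟩⟩ hy heq
    simp only [Function.mem_support] at hx hy
    simp only [Prod.mk.injEq] at heq
    obtain ⟨T1, hT1⟩ := exists_tableau (a := a) (b := b) (by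
      intro hz; rw [show lrCoeff lam a b = lrCoeff lam a b from rfl] at hz
      apply hx; rw [hz]; ring)
    obtain ⟨T2, hT2⟩ := exists_tableau (a := a) (b := g) (by
      intro hz; apply hx; rw [hz]; ring)
    obtain ⟨T1', hT1'⟩ := exists_tableau (a := a') (b := b') (by
      intro hz; apply hy; rw [hz]; ring)
    obtain ⟨T2', hT2'⟩ := exists_tableau (a := a') (b := g') (by
      intro hz; apply hy; rw [hz]; ring)
    have Ba := shape_bound hlam hT1 ha
    have Ba' := shape_bound hlam hT1' ha'
    have Bb := content_bound hlam hT1 hb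
    have Bb' := content_bound hlam hT1' hb'
    have Bg := content_bound hlam hT2 hg
    have Bg' := content_bound hlam hT2' hg'
    have e1 : a = a' := hkey a ha (by omega) (fun v => by have := Ba.2 v; omega)
      a' ha' (by omega) (fun v => by have := Ba'.2 v; omega) heq.1
    have e2 : b = b' := hkey b hb (by omega) (fun v => by have := Bb.2 v; omega)
      b' hb' (by omega) (fun v => by have := Bb'.2 v; omega) heq.2.1
    have e3 : g = g' := hkey g hg (by omega) (fun v => by have := Bg.2 v; omega)
      g' hg' (by omega) (fun v => by have := Bg'.2 v; omega) heq.2.2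
    subst e1; subst e2; subst e3
    rfl

end
end NLW


/-- If `λ` has an even number of parts, all pairwise distinct and odd, then
`N^λ_{λλ} ≥ 1`; equivalently, `⊗³` detects `𝕊_{∥λ∥}(G)` in this case. -/
theorem one_le_nlCoeff_of_distinct_odd_parts (lam : List ℕ)
    (hlam : IsPartition lam) (hlen : Even lam.length)
    (hdist : lam.Nodup) (hodd : ∀ x ∈ lam, Odd x) :
    1 ≤ nlCoeff lam lam lam := by
  classical
  have hd : IsPartition (NLW.dlt lam) := NLW.dlt_isPartition hlam hdist hodd
  set x0 : {l : List ℕ // IsPartition l} × {l : List ℕ // IsPartition l} ×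
      {l : List ℕ // IsPartition l} :=
    (⟨NLW.dlt lam, hd⟩, ⟨NLW.dlt lam, hd⟩, ⟨NLW.dlt lam, hd⟩) with hx0
  have hc := NLW.one_le_lrCoeff hlam hlen hdist hodd
  have h1 : 1 ≤ lrCoeff lam x0.1.val x0.2.1.val * lrCoeff lam x0.1.val x0.2.2.val *
      lrCoeff lam x0.2.1.val x0.2.2.val := by
    rw [hx0]
    simp only
    exact le_trans hc (Nat.le_mul_of_pos_left _ (by positivity))
  have h2 := single_le_finsum x0 (NLW.nl_support_finite hlam)
    (fun j => Nat.zero_le _)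
  unfold nlCoeff
  omega
end

section
/- Let a be an odd nonnegative integer and b an even nonnegative integer, let λ = (1+a, 1^b) be the hook partition with arm length a and leg length b, and let α = (1 + (a−1)/2, 1^{b/2}). Then the Littlewood–Richardson coefficient c^λ_{αα} is at least 1. -/
/-- The hook partition `(1 + a, 1^b)` with arm length `a` and leg length
`b`. -/
def hook (a b : ℕ) : List ℕ := (1 + a) :: List.replicate b 1

/-! ### Auxiliary material -/

theorem part_hook (a b i : ℕ) :
    part (hook a b) i = if i = 0 then 1 + a else if i ≤ b then 1 else 0 := by
  cases i with
  | zero => rfl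
  | succ i =>
    simp only [part, hook, List.getD_cons_succ]
    rw [List.getD_eq_getElem?_getD, List.getElem?_replicate]
    split_ifs <;> simp_all <;> omega

/-- The explicit LR tableau. -/
def hookT (m n : ℕ) : ℕ → ℕ → ℕ := fun i j =>
  if i = 0 then (if m + 1 ≤ j ∧ j < 2 * m + 2 then 1 else 0)
  else if n + 1 ≤ i ∧ i ≤ 2 * n ∧ j = 0 then i - n + 1 else 0

theorem inSkew_iff (m n i j : ℕ) :
    InSkew (hook (2 * m + 1) (2 * n)) (hook m n) i j ↔
      (i = 0 ∧ m + 1 ≤ j ∧ j < 2 * m + 2) ∨ (n + 1 ≤ i ∧ i ≤ 2 * n ∧ j = 0) := by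
  simp only [InSkew, part_hook]
  split_ifs <;> omega

theorem hookT_eq_iff (m n i j k : ℕ) :
    hookT m n i j = k + 1 ↔
      (k = 0 ∧ i = 0 ∧ m + 1 ≤ j ∧ j < 2 * m + 2) ∨
      (1 ≤ k ∧ k ≤ n ∧ i = n + k ∧ j = 0) := by
  unfold hookT
  split_ifs <;> first | omega | (rw [false_iff]; omega)

theorem content_set_eq (m n k : ℕ) :
    {p : ℕ × ℕ | hookT m n p.1 p.2 = k + 1} =
      ↑(if k = 0 then (Finset.Ico (m + 1) (2 * m + 2)).image (fun j => ((0 : ℕ), j))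
        else if k ≤ n then {((n + k : ℕ), (0 : ℕ))} else (∅ : Finset (ℕ × ℕ))) := by
  ext ⟨i, j⟩
  simp only [Set.mem_setOf_eq, hookT_eq_iff]
  split_ifs <;> simp_all [Prod.ext_iff] <;> omega

theorem content_ncard (m n k : ℕ) :
    {p : ℕ × ℕ | hookT m n p.1 p.2 = k + 1}.ncard = part (hook m n) k := by
  rw [content_set_eq, Set.ncard_coe_finset, part_hook]
  split_ifs with h1 h2
  · rw [Finset.card_image_of_injective _ (by intro x y h; simpa using h)]
    rw [Nat.card_Ico]; omega
  · simp
  · simp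

theorem content_set_finite (m n k : ℕ) :
    {p : ℕ × ℕ | hookT m n p.1 p.2 = k + 1}.Finite := by
  rw [content_set_eq]; exact (Finset.finite_toSet _)

theorem isLR_hookT (m n : ℕ) :
    IsLRTableau (hook (2 * m + 1) (2 * n)) (hook m n) (hook m n) (hookT m n) := by
  constructor
  · intro i; rw [part_hook, part_hook]; split_ifs <;> omega
  · intro i j; rw [inSkew_iff]; unfold hookT; split_ifs <;> omega
  · intro i j j' h1 h2 hle
    rw [inSkew_iff] at h1 h2
    unfold hookT; split_ifs <;> omega
  · intro i i' j h1 h2 hlt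
    rw [inSkew_iff] at h1 h2
    unfold hookT; split_ifs <;> omega
  · exact content_ncard m n
  · intro r c k
    set A := {p : ℕ × ℕ | hookT m n p.1 p.2 = k + 2 ∧ ReadingLE p.1 p.2 r c} with hA
    set B := {p : ℕ × ℕ | hookT m n p.1 p.2 = k + 1 ∧ ReadingLE p.1 p.2 r c} with hB
    rcases Set.eq_empty_or_nonempty A with he | ⟨⟨i, j⟩, hij⟩
    · simp [he]
    · -- A is nonempty; identify its unique element
      obtain ⟨hval, hrd⟩ := hij
      rw [hookT_eq_iff] at hval
      have hij' : i = n + (k + 1) ∧ j = 0 ∧ k + 1 ≤ n := by omega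
      obtain ⟨hi, hj, hkn⟩ := hij'
      -- A ⊆ {(n+k+1, 0)}
      have hAsub : A ⊆ {(n + (k + 1), 0)} := by
        rintro ⟨i', j'⟩ ⟨hv, _⟩
        rw [hookT_eq_iff] at hv
        simp only [Set.mem_singleton_iff, Prod.ext_iff]
        omega
      have hAcard : A.ncard ≤ 1 := by
        calc A.ncard ≤ ({(n + (k + 1), 0)} : Set (ℕ × ℕ)).ncard :=
              Set.ncard_le_ncard hAsub (Set.finite_singleton _)
          _ = 1 := Set.ncard_singleton _
      -- B is nonempty
      have hrd' : n + (k + 1) < r ∨ (n + (k + 1) = r ∧ c = 0) := by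
        rcases hrd with h | h
        · left; omega
        · right; omega
      have hBne : B.Nonempty := by
        rcases Nat.eq_zero_or_pos k with hk | hk
        · refine ⟨(0, m + 1), ?_, ?_⟩
          · rw [hookT_eq_iff]; left; omega
          · left; omega
        · refine ⟨(n + k, 0), ?_, ?_⟩
          · rw [hookT_eq_iff]; right; omega
          · left; omega
      have hBfin : B.Finite :=
        (content_set_finite m n k).subset (fun p hp => hp.1)
      have : 0 < B.ncard := (Set.ncard_pos hBfin).mpr hBne
      omega

theorem skew_subset (m n i j : ℕ) (h : InSkew (hook (2 * m + 1) (2 * n)) (hook m n) i j) :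
    (i, j) ∈ Finset.range (2 * n + 1) ×ˢ Finset.range (2 * m + 2) := by
  rw [inSkew_iff] at h
  simp only [Finset.mem_product, Finset.mem_range]
  omega

theorem lr_val_le (m n : ℕ) (T : ℕ → ℕ → ℕ)
    (hT : IsLRTableau (hook (2 * m + 1) (2 * n)) (hook m n) (hook m n) T)
    (i j : ℕ) : T i j ≤ n + 1 := by
  by_contra h
  push_neg at h
  obtain ⟨k, hk, hkval⟩ : ∃ k, n + 1 ≤ k ∧ T i j = k + 1 := ⟨T i j - 1, by omega, by omega⟩
  have hfin : {p : ℕ × ℕ | T p.1 p.2 = k + 1}.Finite := by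
    apply Set.Finite.subset (Set.Finite.ofFinset
      (Finset.range (2 * n + 1) ×ˢ Finset.range (2 * m + 2)) (fun p => Iff.rfl))
    intro ⟨i', j'⟩ hp
    simp only [Set.mem_setOf_eq] at hp
    exact skew_subset m n i' j' ((hT.support i' j').mp (by omega))
  have h0 : {p : ℕ × ℕ | T p.1 p.2 = k + 1}.ncard = 0 := by
    rw [hT.content k, part_hook]
    split_ifs <;> omega
  have := (Set.ncard_eq_zero hfin).mp h0
  have : (i, j) ∈ {p : ℕ × ℕ | T p.1 p.2 = k + 1} := hkval
  simp_all

theorem lr_set_finite_s9 (m n : ℕ) :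
    {T : ℕ → ℕ → ℕ | IsLRTableau (hook (2 * m + 1) (2 * n)) (hook m n) (hook m n) T}.Finite := by
  set S := {T : ℕ → ℕ → ℕ | IsLRTableau (hook (2 * m + 1) (2 * n)) (hook m n) (hook m n) T}
  rw [← Set.finite_coe_iff]
  apply Finite.of_injective
    (f := fun (T : S) (p : (Finset.range (2 * n + 1) ×ˢ Finset.range (2 * m + 2) : Finset (ℕ × ℕ)))
      => (⟨T.1 p.1.1 p.1.2, Nat.lt_succ_of_le (lr_val_le m n T.1 T.2 p.1.1 p.1.2)⟩ : Fin (n + 2)))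
  rintro ⟨T1, h1⟩ ⟨T2, h2⟩ heq
  apply Subtype.ext
  funext i j
  show T1 i j = T2 i j
  by_cases hmem : (i, j) ∈ Finset.range (2 * n + 1) ×ˢ Finset.range (2 * m + 2)
  · have := congrFun heq ⟨(i, j), hmem⟩
    simpa [Fin.ext_iff] using this
  · have e1 : T1 i j = 0 := by
      by_contra h
      exact hmem (skew_subset m n i j ((h1.support i j).mp (by omega)))
    have e2 : T2 i j = 0 := by
      by_contra h
      exact hmem (skew_subset m n i j ((h2.support i j).mp (by omega)))
    rw [e1, e2]

/-- For the hook `λ = (1+a, 1^b)` with `a` odd and `b` even, and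
`α = (1 + (a−1)/2, 1^{b/2})`, one has `c^λ_{αα} ≥ 1`. -/
theorem one_le_lrCoeff_hook_odd_arm (a b : ℕ) (ha : Odd a) (hb : Even b) :
    1 ≤ lrCoeff (hook a b) (hook ((a - 1) / 2) (b / 2))
        (hook ((a - 1) / 2) (b / 2)) := by
  obtain ⟨m, hm⟩ := ha
  obtain ⟨n, hn⟩ := hb
  have ha' : a = 2 * m + 1 := by omega
  have hm' : (a - 1) / 2 = m := by omega
  have hn' : b = 2 * n := by omega
  have hn'' : b / 2 = n := by omega
  rw [hm', hn'', ha', hn', lrCoeff]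
  have hne : {T : ℕ → ℕ → ℕ |
      IsLRTableau (hook (2 * m + 1) (2 * n)) (hook m n) (hook m n) T}.Nonempty :=
    ⟨hookT m n, isLR_hookT m n⟩
  exact (Set.ncard_pos (lr_set_finite_s9 m n)).mpr hne
end
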